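/- arXiv:2007.01609 — 11 statements merged into one kernel-verified Lean document; each statement's English description precedes it below -/
import Mathlib

section
/- Let q be a prime power with q ≡ 1 (mod 4), n = 2t, and W = {x ∈ F_{q^n} : x + x^{q^t} = 0}. Then for any natural number k, no element x of W satisfies x^{q^k + 1} = 1. -/
lemma aux_gcd (a b : ℕ) (ha : 4 ∣ a) (hb : b % 4 = 2) : Nat.gcd (2 * a) b ∣ a := by
  obtain ⟨m, hm⟩ : ∃ m, b = 2 * (2 * m + 1) := ⟨b / 4, by omega⟩
  subst hm
  rw [Nat.gcd_mul_left]
  have hodd : Odd (Nat.gcd a (2 * m + 1)) :=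
    (Nat.odd_iff.mpr (by omega)).of_dvd_nat (Nat.gcd_dvd_right _ _)
  refine (Nat.coprime_two_left.mpr hodd).mul_dvd_of_dvd_of_dvd
    (dvd_trans ⟨2, rfl⟩ ha) (Nat.gcd_dvd_left _ _)

theorem stmt_2 (p r q t : ℕ) (hp : p.Prime) (hr : 0 < r)
    (hq : q = p ^ r) (hq4 : q % 4 = 1) (ht : 1 ≤ t)
    (F : Type) [Field F] [Fintype F] (hF : Fintype.card F = q ^ (2 * t)) :
    ∀ (k : ℕ) (x : F), x ^ q ^ t = -x → x ^ (q ^ k + 1) ≠ 1 := by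
  intro k x hW hcon
  -- p is odd
  have hpodd : p ≠ 2 := by
    rintro rfl
    subst hq
    rcases r with _ | r
    · omega
    · rcases r with _ | r
      · omega
      · have : 4 ∣ 2 ^ (r + 2) := ⟨2 ^ r, by ring⟩
        omega
  -- characteristic is p, hence odd, so -1 ≠ 1
  have hchar : (-1 : F) ≠ 1 := by
    intro h
    have h2 : (2 : F) = 0 := by linear_combination -h
    set c := ringChar F with hc
    haveI : CharP F c := ringChar.charP F
    obtain ⟨n, hcp, hcard⟩ := FiniteField.card F c
    have hdvd : p ∣ c ^ (n : ℕ) := by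
      rw [← hcard, hF, hq, ← pow_mul]
      exact dvd_pow_self p (by positivity)
    have hpc : p = c := by
      rcases (Nat.Prime.dvd_of_dvd_pow hp hdvd) with h'
      exact (Nat.prime_dvd_prime_iff_eq hp hcp).mp h'
    have hc2 : c ∣ 2 := (CharP.cast_eq_zero_iff F c 2).mp (by exact_mod_cast h2)
    exact hpodd (hpc.trans ((Nat.prime_dvd_prime_iff_eq hcp Nat.prime_two).mp hc2))
  -- x ≠ 0
  have hx0 : x ≠ 0 := by
    rintro rfl
    rw [zero_pow (by positivity)] at hcon
    exact zero_ne_one hcon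
  -- x ^ (q^t - 1) = -1
  have hqt1 : 1 ≤ q ^ t := Nat.one_le_pow _ _ (by omega)
  set a := q ^ t - 1 with hadef
  have hxa : x ^ a = -1 := by
    have h1 : x ^ a * x = -x := by
      rw [← pow_succ]
      have : a + 1 = q ^ t := by omega
      rw [this, hW]
    field_simp at h1
    rcases mul_eq_mul_right_iff.mp (by linear_combination x * h1 : x ^ a * x = -1 * x) with h | h
    · exact h
    · exact absurd h hx0
  -- order divisibility
  have h2a : x ^ (2 * a) = 1 := by
    rw [mul_comm, pow_mul, hxa]; ring
  have hd1 : orderOf x ∣ 2 * a := orderOf_dvd_of_pow_eq_one h2a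
  have hd2 : orderOf x ∣ q ^ k + 1 := orderOf_dvd_of_pow_eq_one hcon
  have hqk : q ^ k % 4 = 1 := by
    rw [Nat.pow_mod, hq4, Nat.one_pow]
  have h4a : 4 ∣ a := by
    have : q ^ t % 4 = 1 := by rw [Nat.pow_mod, hq4, Nat.one_pow]
    omega
  have hda : orderOf x ∣ a :=
    dvd_trans (Nat.dvd_gcd hd1 hd2) (aux_gcd a (q ^ k + 1) h4a (by omega))
  have : x ^ a = 1 := orderOf_dvd_iff_pow_eq_one.mp hda
  rw [hxa] at this
  exact hchar this
end

section
/- Let q be a prime power with q ≡ 3 (mod 4), t odd, k odd, n = 2t, and W = {x ∈ F_{q^n} : x + x^{q^t} = 0}. Then there exists x ∈ W with x^{q^k + 1} = 1. -/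
lemma pow_mod4 (q s : ℕ) (hq4 : q % 4 = 3) (hs : Odd s) : q ^ s % 4 = 3 := by
  obtain ⟨c, rfl⟩ := hs
  have h1 : q ^ (2*c+1) % 4 = (q%4) ^ (2*c+1) % 4 := by rw [Nat.pow_mod]
  rw [hq4] at h1
  have h2 : (3:ℕ) ^ (2*c+1) = 9^c * 3 := by rw [pow_succ, pow_mul]; norm_num
  have h3 : (9:ℕ)^c % 4 = 1 := by
    rw [Nat.pow_mod]; norm_num
  rw [h2, Nat.mul_mod, h3] at h1
  omega

theorem stmt_3 (p r q t k : ℕ) (hp : p.Prime) (hr : 0 < r)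
    (hq : q = p ^ r) (hq4 : q % 4 = 3) (ht : 1 ≤ t) (htodd : Odd t) (hkodd : Odd k)
    (F : Type) [Field F] [Fintype F] (hF : Fintype.card F = q ^ (2 * t)) :
    ∃ x : F, x ^ q ^ t = -x ∧ x ^ (q ^ k + 1) = 1 := by
  have hq1 : 1 < q := by
    rw [hq]; exact Nat.one_lt_pow (by omega) hp.one_lt
  have hcard : Nat.card Fˣ = q ^ (2*t) - 1 := by
    rw [Nat.card_units, Nat.card_eq_fintype_card, hF]
  have hmod : q ^ (2*t) % 4 = 1 := by
    have : q ^ (2*t) = (q^2)^t := by ring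
    have h2 : q^2 % 4 = 1 := by rw [Nat.pow_mod, hq4]
    rw [this, Nat.pow_mod, h2, one_pow]; rfl
  have hpos : 1 ≤ q ^ (2*t) := Nat.one_le_pow _ _ (by omega)
  have h4 : ∃ m, q ^ (2*t) - 1 = 4 * m := ⟨(q^(2*t)-1)/4, by omega⟩
  obtain ⟨m, hm⟩ := h4
  obtain ⟨g, hg⟩ := IsCyclic.exists_ofOrder_eq_natCard (α := Fˣ)
  rw [hcard, hm] at hg
  have hm0 : 0 < m := by
    rcases Nat.eq_zero_or_pos m with h | h
    · exfalso
      have := orderOf_pos g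
      omega
    · exact h
  set x := g ^ m with hx
  have hox : orderOf x = 4 := by
    rw [hx, orderOf_pow, hg]
    have hgcd : (4*m).gcd m = m := Nat.gcd_eq_right (dvd_mul_left m 4)
    rw [hgcd]
    exact Nat.mul_div_cancel _ hm0
  have hx4 : x ^ 4 = 1 := by rw [← hox]; exact pow_orderOf_eq_one x
  have hx2 : x ^ 2 ≠ 1 := by
    intro h
    have := orderOf_dvd_of_pow_eq_one h
    rw [hox] at this
    omega
  -- pass to F
  set y : F := (x : F) with hy
  have hy4 : y ^ 4 = 1 := by rw [hy, ← Units.val_pow_eq_pow_val, hx4, Units.val_one]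
  have hy2 : y ^ 2 ≠ 1 := by
    intro h
    apply hx2
    ext
    rw [Units.val_pow_eq_pow_val, ← hy, h, Units.val_one]
  have hy2' : y ^ 2 = -1 := by
    have hfac : (y^2 - 1) * (y^2 + 1) = 0 := by linear_combination hy4
    rcases mul_eq_zero.mp hfac with h | h
    · exact absurd (sub_eq_zero.mp h) hy2
    · exact eq_neg_of_add_eq_zero_left h
  refine ⟨y, ?_, ?_⟩
  · have h3 : q ^ t % 4 = 3 := pow_mod4 q t hq4 htodd
    have : q ^ t = 4 * (q^t/4) + 3 := by omega
    rw [this, pow_add, pow_mul, hy4, one_pow, one_mul]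
    calc y^3 = y^2 * y := by ring
    _ = -y := by rw [hy2']; ring
  · have h3 : q ^ k % 4 = 3 := pow_mod4 q k hq4 hkodd
    have : q ^ k + 1 = 4 * ((q^k+1)/4) := by omega
    rw [this, pow_mul, hy4, one_pow]
end

section
/- Let q be an odd prime power, n = 2t with t ≥ 3, and ψ(x) = (x^q + x^{q^{t-1}} - x^{q^{t+1}} + x^{q^{2t-1}})/2, viewed as an F_q-linear map on F_{q^n}. Then for every natural number k with 0 ≤ k ≤ t, the k-fold composition of ψ with itself satisfies ψ^{(k)}(x) = (x^{q^k} + x^{q^{t-k}} - x^{q^{t+k}} + x^{q^{2t-k}})/2 for all x ∈ F_{q^n}, where exponents of q are taken modulo 2t. -/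
theorem stmt_5 (p r q t : ℕ) (hp : p.Prime) (hpodd : Odd p) (hr : 0 < r)
    (hq : q = p ^ r) (ht : 3 ≤ t)
    (F : Type) [Field F] [Fintype F] (hF : Fintype.card F = q ^ (2 * t))
    (ψ : F → F)
    (hψ : ∀ x : F, ψ x = (x ^ q ^ 1 + x ^ q ^ (t - 1) - x ^ q ^ (t + 1) + x ^ q ^ (2 * t - 1)) / 2) :
    ∀ k : ℕ, k ≤ t → ∀ x : F,
      ψ^[k] x = (x ^ q ^ (k % (2 * t)) + x ^ q ^ ((t - k) % (2 * t))
        - x ^ q ^ ((t + k) % (2 * t)) + x ^ q ^ ((2 * t - k) % (2 * t))) / 2 := by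
  have hpne2 : p ≠ 2 := by rintro rfl; exact (Nat.not_odd_iff_even.mpr even_two) hpodd
  have hpc : CharP F p := by
    obtain ⟨n, hprime, hcard⟩ := FiniteField.card F (ringChar F)
    have hdvd : p ∣ (ringChar F) ^ (n : ℕ) := by
      rw [← hcard, hF, hq, ← pow_mul]
      exact dvd_pow_self p (by positivity)
    have hpr : p = ringChar F :=
      (Nat.prime_dvd_prime_iff_eq hp hprime).mp (hp.dvd_of_dvd_pow hdvd)
    rw [hpr]; infer_instance
  have h2 : (2 : F) ≠ 0 := by
    intro h
    have h' : ((2 : ℕ) : F) = 0 := by exact_mod_cast h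
    have hdvd : p ∣ 2 := (CharP.cast_eq_zero_iff F p 2).mp h'
    exact hpne2 ((Nat.prime_dvd_prime_iff_eq hp Nat.prime_two).mp hdvd)
  have hmod : ∀ (x : F) (a : ℕ), x ^ q ^ a = x ^ q ^ (a % (2 * t)) := by
    intro x a
    have hrepr : a = a % (2 * t) + 2 * t * (a / (2 * t)) := (Nat.mod_add_div a (2 * t)).symm
    conv_lhs => rw [hrepr]
    rw [pow_add, pow_mul, pow_mul, ← hF]
    exact FiniteField.pow_card_pow _ _
  have per : ∀ (x : F) (a : ℕ), x ^ q ^ (a + 2 * t) = x ^ q ^ a := by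
    intro x a
    rw [hmod x (a + 2 * t), hmod x a, Nat.add_mod_right]
  have N : ∀ (x : F) (a b : ℕ), a = b + 2 * t → x ^ q ^ a = x ^ q ^ b := by
    intro x a b h; rw [h, per]
  have N2 : ∀ (x : F) (a b : ℕ), a = b + 2 * t + 2 * t → x ^ q ^ a = x ^ q ^ b := by
    intro x a b h; rw [h, per, per]
  haveI := hpc
  haveI : ExpChar F p := .prime hp
  have NE : ∀ (x : F) (a b : ℕ), a = b → x ^ q ^ a = x ^ q ^ b := by
    intro x a b h; rw [h]
  have hfrob : ∀ j : ℕ, ∃ φ : F →+* F, ∀ y : F, φ y = y ^ q ^ j := by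
    intro j
    refine ⟨iterateFrobenius F p (r * j), fun y => ?_⟩
    rw [iterateFrobenius_def, hq, ← pow_mul]
  have hpow : ∀ (x : F) (a j : ℕ), (x ^ q ^ a) ^ q ^ j = x ^ q ^ (a + j) := by
    intro x a j; rw [← pow_mul, ← pow_add]
  have main : ∀ k : ℕ, k ≤ t → ∀ x : F,
      ψ^[k] x = (x ^ q ^ k + x ^ q ^ (3 * t - k) - x ^ q ^ (t + k) + x ^ q ^ (4 * t - k)) / 2 := by
    intro k
    induction k with
    | zero =>
      intro _ x
      have e1 : x ^ q ^ (3 * t - 0) = x ^ q ^ t := N x _ _ (by omega)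
      have e2 : x ^ q ^ (4 * t - 0) = x ^ q ^ (0 : ℕ) := N2 x _ _ (by omega)
      rw [Function.iterate_zero_apply, e1, e2, Nat.add_zero, pow_zero, pow_one]
      field_simp
      ring
    | succ k ih =>
      intro hk1 x
      have hk : k ≤ t := by omega
      rw [Function.iterate_succ_apply', ih hk x, hψ]
      set E : F := (x ^ q ^ k + x ^ q ^ (3 * t - k) - x ^ q ^ (t + k) + x ^ q ^ (4 * t - k)) / 2
        with hE
      have hEpow : ∀ j : ℕ, E ^ q ^ j =
          (x ^ q ^ (k + j) + x ^ q ^ ((3 * t - k) + j) - x ^ q ^ ((t + k) + j)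
            + x ^ q ^ ((4 * t - k) + j)) / 2 := by
        intro j
        obtain ⟨φ, hφ⟩ := hfrob j
        rw [← hφ, hE, map_div₀, map_add, map_sub, map_add, hφ, hφ, hφ, hφ, map_ofNat,
          hpow, hpow, hpow, hpow]
      rw [hEpow 1, hEpow (t - 1), hEpow (t + 1), hEpow (2 * t - 1)]
      have e1 : x ^ q ^ ((3 * t - k) + 1) = x ^ q ^ (t + 1 - k) := N x _ _ (by omega)
      have e3 : x ^ q ^ ((3 * t - k) + (t - 1)) = x ^ q ^ (4 * t - (k + 1)) := NE x _ _ (by omega)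
      have e4 : x ^ q ^ ((t + k) + (t - 1)) = x ^ q ^ (k + (2 * t - 1)) := NE x _ _ (by omega)
      have e5 : x ^ q ^ ((4 * t - k) + (t - 1)) = x ^ q ^ (3 * t - (k + 1)) := N x _ _ (by omega)
      have e6 : x ^ q ^ (k + (t + 1)) = x ^ q ^ (t + (k + 1)) := NE x _ _ (by omega)
      have e7 : x ^ q ^ ((3 * t - k) + (t + 1)) = x ^ q ^ ((4 * t - k) + 1) := NE x _ _ (by omega)
      have e8 : x ^ q ^ ((t + k) + (t + 1)) = x ^ q ^ (k + 1) := N x _ _ (by omega)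
      have e9 : x ^ q ^ ((4 * t - k) + (t + 1)) = x ^ q ^ (t + 1 - k) := N2 x _ _ (by omega)
      have e10 : x ^ q ^ ((3 * t - k) + (2 * t - 1)) = x ^ q ^ (3 * t - (k + 1)) :=
        N x _ _ (by omega)
      have e11 : x ^ q ^ ((t + k) + (2 * t - 1)) = x ^ q ^ (k + (t - 1)) := N x _ _ (by omega)
      have e12 : x ^ q ^ ((4 * t - k) + (2 * t - 1)) = x ^ q ^ (4 * t - (k + 1)) :=
        N x _ _ (by omega)
      have e13 : x ^ q ^ ((t + k) + 1) = x ^ q ^ (t + (k + 1)) := NE x _ _ (by omega)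
      rw [e1, e3, e4, e5, e6, e7, e8, e9, e10, e11, e12, e13]
      field_simp
      ring
  intro k hk x
  rw [main k hk x]
  have c1 : x ^ q ^ (k % (2 * t)) = x ^ q ^ k := (hmod x k).symm
  have c2 : x ^ q ^ ((t - k) % (2 * t)) = x ^ q ^ (3 * t - k) := by
    rw [← hmod x (t - k)]
    exact (N x _ _ (by omega)).symm
  have c3 : x ^ q ^ ((t + k) % (2 * t)) = x ^ q ^ (t + k) := (hmod x (t + k)).symm
  have c4 : x ^ q ^ ((2 * t - k) % (2 * t)) = x ^ q ^ (4 * t - k) := by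
    rw [← hmod x (2 * t - k)]
    exact (N x _ _ (by omega)).symm
  rw [c1, c2, c3, c4]
end

section
/- Let q be an odd prime power, n = 2t with t ≥ 3, and ψ(x) = (x^q + x^{q^{t-1}} - x^{q^{t+1}} + x^{q^{2t-1}})/2 as an F_q-linear map on F_{q^n}. Then ψ is a bijection of F_{q^n} and the n-fold composition ψ^{(n)} is the identity map; that is, ψ has order dividing n = 2t in the group of F_q-linear automorphisms of F_{q^n}. -/
theorem stmt_6 (p r q t : ℕ) (hp : p.Prime) (hpodd : Odd p) (hr : 0 < r)
    (hq : q = p ^ r) (ht : 3 ≤ t)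
    (F : Type) [Field F] [Fintype F] (hF : Fintype.card F = q ^ (2 * t))
    (ψ : F → F)
    (hψ : ∀ x : F, ψ x = (x ^ q ^ 1 + x ^ q ^ (t - 1) - x ^ q ^ (t + 1) + x ^ q ^ (2 * t - 1)) / 2) :
    Function.Bijective ψ ∧ ψ^[2 * t] = id := by
  haveI := Fact.mk hp
  -- the characteristic of F is p
  have hcard : Fintype.card F = p ^ (r * (2 * t)) := by rw [hF, hq, ← pow_mul]
  haveI hCharP : CharP F p := by
    haveI : CharP F (ringChar F) := ringChar.charP F
    have hcp : (ringChar F).Prime := CharP.char_is_prime F _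
    obtain ⟨n, hn, hcard'⟩ := FiniteField.card F (ringChar F)
    have hdvd : ringChar F ∣ p := by
      refine hcp.dvd_of_dvd_pow (n := r * (2 * t)) ?_
      rw [← hcard, hcard']
      exact dvd_pow_self _ (by positivity)
    have : ringChar F = p := (Nat.prime_dvd_prime_iff_eq hcp hp).mp hdvd
    exact this ▸ ringChar.charP F
  haveI : ExpChar F p := ExpChar.prime hp
  have two_ne : (2 : F) ≠ 0 := by
    intro h
    have hdvd : (p : ℕ) ∣ 2 := (CharP.cast_eq_zero_iff F p 2).mp (by exact_mod_cast h)
    have : p = 2 := (Nat.prime_dvd_prime_iff_eq hp Nat.prime_two).mp hdvd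
    rw [this] at hpodd
    exact absurd hpodd (by decide)
  -- the Frobenius x ↦ x^q as a ℤ-linear endomorphism
  set Φ : Module.End ℤ F := (iterateFrobenius F p r).toAddMonoidHom.toIntLinearMap with hΦdef
  have hΦ : ∀ x : F, Φ x = x ^ q := by
    intro x
    simp [hΦdef, iterateFrobenius_def, hq]
  have hΦpow : ∀ (k : ℕ) (x : F), (Φ ^ k) x = x ^ q ^ k := by
    intro k
    induction k with
    | zero => intro x; simp
    | succ k ih =>
      intro x
      rw [pow_succ, Module.End.mul_apply, hΦ, ih, ← pow_mul, ← pow_succ']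
  have hq2 : (2 : F) ^ q = 2 := by
    have h := map_ofNat (iterateFrobenius F p r) 2
    rwa [iterateFrobenius_def, ← hq] at h
  have hΦ2t : Φ ^ (2 * t) = 1 := by
    apply LinearMap.ext
    intro x
    rw [hΦpow, Module.End.one_apply, ← hF, FiniteField.pow_card]
  -- multiplication by 1/2 as a ℤ-linear endomorphism
  set H : Module.End ℤ F := (AddMonoidHom.mulLeft (2⁻¹ : F)).toIntLinearMap with hHdef
  have hH : ∀ x : F, H x = 2⁻¹ * x := by intro x; simp [hHdef]
  have hcomm : H * Φ = Φ * H := by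
    apply LinearMap.ext
    intro x
    rw [Module.End.mul_apply, Module.End.mul_apply, hH, hΦ, hΦ, hH, mul_pow, inv_pow, hq2]
  have hH2 : H * 2 = 1 := by
    apply LinearMap.ext
    intro x
    have h21 : (2 : Module.End ℤ F) = 1 + 1 := one_add_one_eq_two.symm
    have h2x : (2 : Module.End ℤ F) x = x + x := by
      rw [h21, LinearMap.add_apply, Module.End.one_apply]
    rw [Module.End.mul_apply, hH, h2x, Module.End.one_apply, ← two_mul,
      inv_mul_cancel_left₀ two_ne]
  -- work inside the commutative subring generated by Φ and H
  set K : Subring (Module.End ℤ F) := Subring.closure {Φ, H} with hKdef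
  letI : CommRing K := Subring.closureCommRingOfComm (by
    rintro x (rfl | rfl) y (rfl | rfl)
    · rfl
    · exact hcomm.symm
    · exact hcomm
    · rfl)
  set φ' : K := ⟨Φ, Subring.subset_closure (Set.mem_insert _ _)⟩ with hφ'def
  set h' : K := ⟨H, Subring.subset_closure (Set.mem_insert_of_mem _ rfl)⟩ with hh'def
  set s : K := φ' ^ t with hsdef
  set b : K := φ' ^ (t - 1) with hbdef
  set Ψ : K := h' * ((1 - s) * φ' + (1 + s) * b) with hΨdef
  have hφ2t : φ' ^ (2 * t) = 1 := by
    apply Subtype.ext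
    push_cast
    exact hΦ2t
  have hs : s * s = 1 := by
    rw [hsdef, ← pow_add, ← hφ2t]
    congr 1
    omega
  have h2 : h' * 2 = 1 := by
    apply Subtype.ext
    push_cast
    exact hH2
  have hb2 : b * b = φ' ^ (2 * t - 2) := by
    rw [hbdef, ← pow_add]
    congr 1
    omega
  have hXX : ((1 - s) * φ' + (1 + s) * b) * ((1 - s) * φ' + (1 + s) * b)
      = 2 * ((1 - s) * φ' ^ 2 + (1 + s) * (b * b)) := by
    linear_combination (φ' - b) ^ 2 * hs
  -- the key induction
  have claim : ∀ k : ℕ, k ≤ t →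
      Ψ ^ (2 * k) = h' * ((1 - s) * φ' ^ (2 * k) + (1 + s) * φ' ^ (2 * t - 2 * k)) := by
    intro k
    induction k with
    | zero =>
      intro _
      simp only [Nat.mul_zero, pow_zero, Nat.sub_zero, hφ2t]
      linear_combination -h2
    | succ k ih =>
      intro hkt
      have hk : k ≤ t := Nat.le_of_succ_le hkt
      have e1 : Ψ ^ (2 * (k + 1)) = Ψ ^ (2 * k) * (Ψ * Ψ) := by
        rw [show 2 * (k + 1) = 2 * k + 2 from by ring, pow_add, pow_two]
      have hc : φ' ^ (2 * k) * φ' ^ 2 = φ' ^ (2 * (k + 1)) := by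
        rw [← pow_add, show 2 * k + 2 = 2 * (k + 1) from by ring]
      have hd : φ' ^ (2 * t - 2 * k) * (b * b) = φ' ^ (2 * t - 2 * (k + 1)) := by
        rw [hb2, ← pow_add]
        have : 2 * t - 2 * k + (2 * t - 2) = 2 * t + (2 * t - 2 * (k + 1)) := by omega
        rw [this, pow_add, hφ2t, one_mul]
      rw [e1, ih hk, hΨdef]
      have expand : h' * ((1 - s) * φ' ^ (2 * k) + (1 + s) * φ' ^ (2 * t - 2 * k)) *
            (h' * ((1 - s) * φ' + (1 + s) * b) * (h' * ((1 - s) * φ' + (1 + s) * b)))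
          = h' ^ 3 * (((1 - s) * φ' ^ (2 * k) + (1 + s) * φ' ^ (2 * t - 2 * k)) *
            (((1 - s) * φ' + (1 + s) * b) * ((1 - s) * φ' + (1 + s) * b))) := by
        ring
      rw [expand, hXX]
      linear_combination
        (2 * h' ^ 3 * (φ' ^ (2 * k) - φ' ^ (2 * t - 2 * k)) * (φ' ^ 2 - b * b)) * hs
        + (4 * h' ^ 3 * (1 - s)) * hc
        + (4 * h' ^ 3 * (1 + s)) * hd
        + (h' * (2 * h' + 1) * ((1 - s) * φ' ^ (2 * (k + 1))
            + (1 + s) * φ' ^ (2 * t - 2 * (k + 1)))) * h2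
  have hΨ2t : Ψ ^ (2 * t) = 1 := by
    have h := claim t le_rfl
    rw [h, Nat.sub_self, pow_zero, hφ2t]
    linear_combination h2
  -- back to linear endomorphisms
  set ΨE : Module.End ℤ F := (Ψ : Module.End ℤ F) with hΨEdef
  have hΨE2t : ΨE ^ (2 * t) = 1 := by
    have h := congrArg (Subtype.val) hΨ2t
    push_cast at h
    exact h
  -- ψ agrees with ΨE
  have hψE : ∀ x : F, ψ x = ΨE x := by
    intro x
    have hcoe : ΨE = H * ((1 - Φ ^ t) * Φ + (1 + Φ ^ t) * Φ ^ (t - 1)) := by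
      rw [hΨEdef, hΨdef]
      push_cast
      rfl
    have e1 : (x ^ q) ^ q ^ t = x ^ q ^ (t + 1) := by
      rw [← pow_mul, ← pow_succ']
    have e2 : (x ^ q ^ (t - 1)) ^ q ^ t = x ^ q ^ (2 * t - 1) := by
      rw [← pow_mul, ← pow_add]
      have : t - 1 + t = 2 * t - 1 := by omega
      rw [this]
    rw [hcoe, hψ]
    simp only [Module.End.mul_apply, LinearMap.add_apply, LinearMap.sub_apply,
      Module.End.one_apply, hH, hΦpow, hΦ, pow_one, e1, e2]
    ring
  -- iterates of ψ are powers of ΨE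
  have hiter : ∀ (m : ℕ) (x : F), ψ^[m] x = (ΨE ^ m) x := by
    intro m
    induction m with
    | zero => intro x; simp
    | succ m ih =>
      intro x
      rw [Function.iterate_succ_apply, pow_succ, Module.End.mul_apply, ih, hψE]
  have hid : ψ^[2 * t] = id := by
    funext x
    rw [hiter, hΨE2t, Module.End.one_apply, id_eq]
  refine ⟨?_, hid⟩
  have hsucc : 2 * t = (2 * t - 1) + 1 := by omega
  refine Function.bijective_iff_has_inverse.mpr ⟨ψ^[2 * t - 1], ?_, ?_⟩
  · intro x
    have h := congrFun hid x
    rwa [hsucc, Function.iterate_succ_apply, id_eq] at h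
  · intro x
    have h := congrFun hid x
    rwa [hsucc, Function.iterate_succ_apply', id_eq] at h
end

section
/- Let q be an odd prime power, n = 2t with t ≥ 3, and ψ(x) = (x^q + x^{q^{t-1}} - x^{q^{t+1}} + x^{q^{2t-1}})/2 as an F_q-linear map on F_{q^n}. Then ψ has order exactly n = 2t in the group of F_q-linear automorphisms of F_{q^n}: ψ^{(n)} = id but ψ^{(m)} ≠ id for all 1 ≤ m < n. -/
open Polynomial

lemma aux_poly {F : Type} [Field F] [Fintype F] (N K : ℕ) (hN : 1 < N) (hK : 1 < K)
    (hlt : K * N < Fintype.card F) (C : F)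
    (hall : ∀ y : F, (y - y ^ N) ^ K = C * (y - y ^ N)) : False := by
  set Q : F[X] := X - X ^ N with hQ
  have hX : (X : F[X]).natDegree < ((X : F[X]) ^ N).natDegree := by
    rw [natDegree_X_pow, natDegree_X]; omega
  have hdQ : Q.natDegree = N := by
    rw [hQ, ← natDegree_neg, neg_sub, natDegree_sub_eq_left_of_natDegree_lt hX, natDegree_X_pow]
  set P : F[X] := Q ^ K - Polynomial.C C * Q with hP
  have hdQK : (Q ^ K).natDegree = K * N := by rw [natDegree_pow, hdQ]
  have hlt2 : (Polynomial.C C * Q).natDegree < (Q ^ K).natDegree := by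
    calc (Polynomial.C C * Q).natDegree ≤ Q.natDegree := by
          refine natDegree_mul_le.trans ?_
          simp
      _ < K * N := by rw [hdQ]; nlinarith
      _ = (Q ^ K).natDegree := hdQK.symm
  have hdP : P.natDegree = K * N := by
    rw [hP, natDegree_sub_eq_left_of_natDegree_lt hlt2, hdQK]
  have hP0 : P = 0 := by
    apply Polynomial.eq_zero_of_natDegree_lt_card_of_eval_eq_zero P Function.injective_id
    · intro y
      have hy := hall y
      simp only [hP, hQ, eval_sub, eval_pow, eval_mul, eval_C, eval_X, id_eq]
      rw [hy]; ring
    · rw [hdP]; exact hlt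
  rw [hP0, natDegree_zero] at hdP
  nlinarith

lemma aux_exists {F : Type} [Field F] [Fintype F] (N : ℕ) (hN : 1 < N)
    (hlt : N < Fintype.card F) : ∃ y : F, y ^ N ≠ y := by
  by_contra h
  push_neg at h
  have hX : (X : F[X]).natDegree < ((X : F[X]) ^ N).natDegree := by
    rw [natDegree_X_pow, natDegree_X]; omega
  have hd : ((X : F[X]) ^ N - X).natDegree = N := by
    rw [natDegree_sub_eq_left_of_natDegree_lt hX, natDegree_X_pow]
  have h0 : ((X : F[X]) ^ N - X) = 0 := by
    apply Polynomial.eq_zero_of_natDegree_lt_card_of_eval_eq_zero _ Function.injective_id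
    · intro y; simp [h y]
    · rw [hd]; exact hlt
  rw [h0, natDegree_zero] at hd
  omega

theorem stmt_7 (p r q t : ℕ) (hp : p.Prime) (hpodd : Odd p) (hr : 0 < r)
    (hq : q = p ^ r) (ht : 3 ≤ t)
    (F : Type) [Field F] [Fintype F] (hF : Fintype.card F = q ^ (2 * t))
    (ψ : F → F)
    (hψ : ∀ x : F, ψ x = (x ^ q ^ 1 + x ^ q ^ (t - 1) - x ^ q ^ (t + 1) + x ^ q ^ (2 * t - 1)) / 2) :
    ψ^[2 * t] = id ∧ ∀ m : ℕ, 1 ≤ m → m < 2 * t → ψ^[m] ≠ id := by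
  haveI : Fact p.Prime := ⟨hp⟩
  have hq1 : 1 < q := by
    rw [hq]; exact Nat.one_lt_pow (by omega) hp.one_lt
  have hqodd : Odd q := hq ▸ hpodd.pow
  -- characteristic of F is p
  obtain ⟨c, hc⟩ := CharP.exists F
  haveI := hc
  have hcprime : c.Prime := CharP.char_is_prime F c
  obtain ⟨nn, -, hcard⟩ := FiniteField.card F c
  have hcp : c = p := by
    have hdvd : c ∣ p ^ (r * (2 * t)) := by
      have hcc : Fintype.card F = p ^ (r * (2 * t)) := by rw [hF, hq, ← pow_mul]
      rw [hcc] at hcard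
      exact hcard ▸ dvd_pow_self c (by positivity)
    exact (Nat.prime_dvd_prime_iff_eq hcprime hp).mp (hcprime.dvd_of_dvd_pow hdvd)
  subst hcp
  have h2 : (2 : F) ≠ 0 := by
    intro h
    have hdvd : c ∣ 2 := (CharP.cast_eq_zero_iff F c 2).mp (by exact_mod_cast h)
    have hle := Nat.le_of_dvd two_pos hdvd
    rcases hpodd with ⟨k, hk⟩
    have := hp.two_le
    omega
  -- Frobenius facts
  have hfrob : ∀ (a b : F) (k : ℕ), (a + b) ^ q ^ k = a ^ q ^ k + b ^ q ^ k := by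
    intro a b k
    rw [hq, ← pow_mul]
    exact add_pow_char_pow a b c (r * k)
  have hneg : ∀ (a : F) (k : ℕ), (-a) ^ q ^ k = -(a ^ q ^ k) := fun a k => (hqodd.pow).neg_pow a
  have hcomm : ∀ (a : F) (j k : ℕ), (a ^ q ^ j) ^ q ^ k = a ^ q ^ (j + k) := by
    intro a j k; rw [← pow_mul, ← pow_add]
  have hcard_pow : ∀ a : F, a ^ q ^ (2 * t) = a := by
    intro a; rw [← hF]; exact FiniteField.pow_card a
  have hiter_card : ∀ (a : F) (k : ℕ), a ^ q ^ (2 * t * k) = a := by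
    intro a k
    induction k with
    | zero => simp
    | succ k ih => rw [Nat.mul_succ, ← hcomm a (2 * t * k) (2 * t), ih, hcard_pow]
  have hhalf : ∀ a : F, (a + a) / 2 = a := by
    intro a; rw [div_eq_iff h2]; ring
  -- action on the (-1)-eigenspace of σ^t
  have hψneg : ∀ z : F, z ^ q ^ t = -z → ψ z = z ^ q ^ 1 := by
    intro z hz
    have e1 : z ^ q ^ (t + 1) = -(z ^ q ^ 1) := by rw [← hcomm z t 1, hz, hneg]
    have e2 : z ^ q ^ (2 * t - 1) = -(z ^ q ^ (t - 1)) := by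
      rw [show 2 * t - 1 = t + (t - 1) by omega, ← hcomm z t (t - 1), hz, hneg]
    rw [hψ, e1, e2,
      show z ^ q ^ 1 + z ^ q ^ (t - 1) - -(z ^ q ^ 1) + -(z ^ q ^ (t - 1))
        = z ^ q ^ 1 + z ^ q ^ 1 by ring, hhalf]
  have hVneg_closed : ∀ (z : F) (k : ℕ), z ^ q ^ t = -z → (z ^ q ^ k) ^ q ^ t = -(z ^ q ^ k) := by
    intro z k hz
    rw [hcomm, Nat.add_comm, ← hcomm, hz, hneg]
  have hiterneg : ∀ z : F, z ^ q ^ t = -z → ∀ m : ℕ, ψ^[m] z = z ^ q ^ m := by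
    intro z hz m
    induction m generalizing z with
    | zero => simp
    | succ m ih =>
        rw [Function.iterate_succ_apply, hψneg z hz, ih (z ^ q ^ 1) (hVneg_closed z 1 hz),
          hcomm, Nat.add_comm]
  -- action on the (+1)-eigenspace of σ^t
  have hψpos : ∀ z : F, z ^ q ^ t = z → ψ z = z ^ q ^ (t - 1) := by
    intro z hz
    have e1 : z ^ q ^ (t + 1) = z ^ q ^ 1 := by rw [← hcomm z t 1, hz]
    have e2 : z ^ q ^ (2 * t - 1) = z ^ q ^ (t - 1) := by
      rw [show 2 * t - 1 = t + (t - 1) by omega, ← hcomm z t (t - 1), hz]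
    rw [hψ, e1, e2,
      show z ^ q ^ 1 + z ^ q ^ (t - 1) - z ^ q ^ 1 + z ^ q ^ (t - 1)
        = z ^ q ^ (t - 1) + z ^ q ^ (t - 1) by ring, hhalf]
  have hVpos_closed : ∀ (z : F) (k : ℕ), z ^ q ^ t = z → (z ^ q ^ k) ^ q ^ t = z ^ q ^ k := by
    intro z k hz; rw [hcomm, Nat.add_comm, ← hcomm, hz]
  have hiterpos : ∀ z : F, z ^ q ^ t = z → ∀ m : ℕ, ψ^[m] z = z ^ q ^ ((t - 1) * m) := by
    intro z hz m
    induction m generalizing z with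
    | zero => simp
    | succ m ih =>
        rw [Function.iterate_succ_apply, hψpos z hz, ih _ (hVpos_closed z (t - 1) hz), hcomm,
          show (t - 1) + (t - 1) * m = (t - 1) * (m + 1) by ring]
  -- additivity
  have hadd : ∀ a b : F, ψ (a + b) = ψ a + ψ b := by
    intro a b
    rw [hψ, hψ, hψ, hfrob, hfrob, hfrob, hfrob]
    ring
  have hiter_add : ∀ (m : ℕ) (a b : F), ψ^[m] (a + b) = ψ^[m] a + ψ^[m] b := by
    intro m
    induction m with
    | zero => simp
    | succ m ih =>
        intro a b
        rw [Function.iterate_succ_apply, Function.iterate_succ_apply ψ m a,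
          Function.iterate_succ_apply ψ m b, hadd, ih]
  -- eigen-elements from arbitrary x
  have hvgen : ∀ x : F, (x - x ^ q ^ t) ^ q ^ t = -(x - x ^ q ^ t) := by
    intro x
    rw [sub_eq_add_neg, hfrob, hneg, hcomm, show t + t = 2 * t by ring, hcard_pow]
    ring
  have hugen : ∀ x : F, (x + x ^ q ^ t) ^ q ^ t = x + x ^ q ^ t := by
    intro x
    rw [hfrob, hcomm, show t + t = 2 * t by ring, hcard_pow]
    ring
  have part1 : ψ^[2 * t] = id := by
    funext x
    simp only [id_eq]
    have h1 : ψ^[2 * t] (x + x ^ q ^ t) = x + x ^ q ^ t := by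
      rw [hiterpos _ (hugen x), show (t - 1) * (2 * t) = 2 * t * (t - 1) by ring, hiter_card]
    have h2' : ψ^[2 * t] (x - x ^ q ^ t) = x - x ^ q ^ t := by
      rw [hiterneg _ (hvgen x), hcard_pow]
    have hsum : ψ^[2 * t] (x + x) = x + x := by
      have hx : x + x = (x + x ^ q ^ t) + (x - x ^ q ^ t) := by ring
      rw [hx, hiter_add, h1, h2']
    rw [hiter_add] at hsum
    have h3 : (2 : F) * ψ^[2 * t] x = 2 * x := by linear_combination hsum
    exact mul_left_cancel₀ h2 h3
  refine ⟨part1, ?_⟩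
  intro m hm1 hm2 heq
  have happ : ∀ z : F, z ^ q ^ t = -z → z ^ q ^ m = z := by
    intro z hz
    have h := hiterneg z hz m
    rw [heq] at h
    simp only [id_eq] at h
    exact h.symm
  rcases lt_trichotomy m t with hlt | heqt | hgt
  · exact aux_poly (q ^ t) (q ^ m)
      (Nat.one_lt_pow (by omega) hq1) (Nat.one_lt_pow (by omega) hq1)
      (by rw [← pow_add, hF]; exact Nat.pow_lt_pow_right hq1 (by omega))
      (1 : F) (fun y => by rw [one_mul]; exact happ _ (hvgen y))
  · subst heqt
    obtain ⟨y, hy⟩ := aux_exists (q ^ m) (Nat.one_lt_pow (by omega) hq1)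
      (by rw [hF]; exact Nat.pow_lt_pow_right hq1 (by omega))
    have hz0 : y - y ^ q ^ m ≠ 0 := sub_ne_zero.mpr (fun h => hy h.symm)
    have hzz := happ _ (hvgen y)
    rw [hvgen y] at hzz
    have h3 : (2 : F) * (y - y ^ q ^ m) = 0 := by linear_combination -hzz
    rcases mul_eq_zero.mp h3 with h | h
    · exact h2 h
    · exact hz0 h
  · refine aux_poly (q ^ t) (q ^ (m - t))
      (Nat.one_lt_pow (by omega) hq1) (Nat.one_lt_pow (by omega) hq1)
      (by rw [← pow_add, show m - t + t = m by omega, hF]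
          exact Nat.pow_lt_pow_right hq1 (by omega))
      (-1 : F) ?_
    intro y
    have hz := hvgen y
    have h1 := happ _ hz
    have h2' : (y - y ^ q ^ t) ^ q ^ (t + (m - t)) = -((y - y ^ q ^ t) ^ q ^ (m - t)) := by
      rw [← hcomm _ t (m - t), hz, hneg]
    rw [show t + (m - t) = m by omega] at h2'
    rw [h2'] at h1
    rw [neg_one_mul]
    linear_combination -h1
end

section
/- Let q be an odd prime power, t ≥ 3 even, n = 2t, and ψ(x) = (x^q + x^{q^{t-1}} - x^{q^{t+1}} + x^{q^{2t-1}})/2 ∈ F_{q^n}[x]. Then ψ is a scattered q-polynomial: for all nonzero y, z ∈ F_{q^n}, if ψ(y)/y = ψ(z)/z then y and z are F_q-linearly dependent. -/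
theorem stmt_8 (p r q t : ℕ) (hp : p.Prime) (hpodd : Odd p) (hr : 0 < r)
    (hq : q = p ^ r) (ht : 3 ≤ t) (hteven : Even t)
    (F : Type) [Field F] [Fintype F] (hF : Fintype.card F = q ^ (2 * t))
    (ψ : F → F)
    (hψ : ∀ x : F, ψ x = (x ^ q ^ 1 + x ^ q ^ (t - 1) - x ^ q ^ (t + 1) + x ^ q ^ (2 * t - 1)) / 2) :
    ∀ y z : F, y ≠ 0 → z ≠ 0 → ψ y / y = ψ z / z →
      ∃ c : F, c ^ q = c ∧ z = c * y := by
  intro y z hy hz hyz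
  haveI hfact : Fact p.Prime := ⟨hp⟩
  have hq1 : 1 < q := by
    rw [hq]; exact Nat.one_lt_pow (by omega) hp.one_lt
  have hq0 : q ≠ 0 := by omega
  have hqodd : Odd q := by rw [hq]; exact hpodd.pow
  have hqt0 : q ^ (t - 1) ≠ 0 := pow_ne_zero _ hq0
  -- characteristic of F is p
  have hcard : Fintype.card F = p ^ (r * (2 * t)) := by rw [hF, hq, ← pow_mul]
  have hpr : ringChar F = p := by
    obtain ⟨n, hprime, hcard'⟩ := FiniteField.card F (ringChar F)
    have hd : p ∣ ringChar F ^ (n : ℕ) := by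
      rw [← hcard', hcard]
      exact dvd_pow_self p (by positivity)
    have hd2 : p ∣ ringChar F := hp.dvd_of_dvd_pow hd
    exact ((Nat.prime_dvd_prime_iff_eq hp hprime).mp hd2).symm
  haveI hcharF : CharP F p := hpr ▸ ringChar.charP F
  have htwoF : (2 : F) ≠ 0 := by
    intro h
    have h2 : ((2 : ℕ) : F) = 0 := by exact_mod_cast h
    have := (CharP.cast_eq_zero_iff F p 2).mp h2
    have hp2 : p = 2 := (Nat.prime_dvd_prime_iff_eq hp Nat.prime_two).mp this
    rw [hp2] at hpodd
    exact (Nat.not_odd_iff_even.mpr (by decide)) hpodd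
  -- Frobenius facts
  have hfrobadd : ∀ (j : ℕ) (x w : F), (x + w) ^ q ^ j = x ^ q ^ j + w ^ q ^ j := by
    intro j x w
    rw [hq, ← pow_mul]
    exact add_pow_char_pow x w p (r * j)
  have hfrobsub : ∀ (j : ℕ) (x w : F), (x - w) ^ q ^ j = x ^ q ^ j - w ^ q ^ j := by
    intro j x w
    rw [hq, ← pow_mul]
    exact sub_pow_char_pow x w (r * j)
  have hfrobaddq : ∀ x w : F, (x + w) ^ q = x ^ q + w ^ q := by
    intro x w; have := hfrobadd 1 x w; simpa using this
  have hfrobsubq : ∀ x w : F, (x - w) ^ q = x ^ q - w ^ q := by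
    intro x w; have := hfrobsub 1 x w; simpa using this
  have hcardpow : ∀ x : F, x ^ q ^ (2 * t) = x := by
    intro x; rw [← hF]; exact FiniteField.pow_card x
  have hsig2 : ∀ x : F, (x ^ q ^ t) ^ q ^ t = x := by
    intro x
    rw [← pow_mul, ← pow_add, show t + t = 2 * t by omega]
    exact hcardpow x
  -- the half-trace decomposition of y and z
  set aa : F := y + y ^ q ^ t with haadef
  set bb : F := y - y ^ q ^ t with hbbdef
  set cc : F := z + z ^ q ^ t with hccdef
  set dd : F := z - z ^ q ^ t with hdddef
  have haK : aa ^ q ^ t = aa := by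
    rw [haadef, hfrobadd t, hsig2]; ring
  have hbA : bb ^ q ^ t = -bb := by
    rw [hbbdef, hfrobsub t, hsig2]; ring
  have hcK : cc ^ q ^ t = cc := by
    rw [hccdef, hfrobadd t, hsig2]; ring
  have hdA : dd ^ q ^ t = -dd := by
    rw [hdddef, hfrobsub t, hsig2]; ring
  have h2y : aa + bb = 2 * y := by rw [haadef, hbbdef]; ring
  have h2z : cc + dd = 2 * z := by rw [hccdef, hdddef]; ring
  -- ψ in terms of the decomposition
  have hccpow : ∀ x : F, (x ^ q ^ t) ^ q ^ (t - 1) = x ^ q ^ (2 * t - 1) := by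
    intro x
    rw [← pow_mul, ← pow_add, show t + (t - 1) = 2 * t - 1 by omega]
  have hccpow2 : ∀ x : F, (x ^ q ^ t) ^ q = x ^ q ^ (t + 1) := by
    intro x
    rw [← pow_mul, ← pow_succ]
  have hψa : 2 * ψ y = aa ^ q ^ (t - 1) + bb ^ q := by
    rw [hψ y, haadef, hbbdef, hfrobadd (t - 1), hfrobsubq, hccpow, hccpow2, pow_one]
    field_simp; ring
  have hψc : 2 * ψ z = cc ^ q ^ (t - 1) + dd ^ q := by
    rw [hψ z, hccdef, hdddef, hfrobadd (t - 1), hfrobsubq, hccpow, hccpow2, pow_one]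
    field_simp; ring
  -- the fundamental equation
  have hE0 : ψ y * z = ψ z * y := (div_eq_div_iff hy hz).mp hyz
  have hE : (aa ^ q ^ (t - 1) + bb ^ q) * (cc + dd)
      = (cc ^ q ^ (t - 1) + dd ^ q) * (aa + bb) := by
    rw [← hψa, ← hψc, h2y, h2z]
    linear_combination (4 : F) * hE0
  -- conjugate equation
  have haK' : (aa ^ q ^ (t - 1)) ^ q ^ t = aa ^ q ^ (t - 1) := by
    rw [pow_right_comm, haK]
  have hcK' : (cc ^ q ^ (t - 1)) ^ q ^ t = cc ^ q ^ (t - 1) := by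
    rw [pow_right_comm, hcK]
  have hbA' : (bb ^ q) ^ q ^ t = -(bb ^ q) := by
    rw [pow_right_comm, hbA]
    exact Odd.neg_pow hqodd bb
  have hdA' : (dd ^ q) ^ q ^ t = -(dd ^ q) := by
    rw [pow_right_comm, hdA]
    exact Odd.neg_pow hqodd dd
  have hEs : (aa ^ q ^ (t - 1) - bb ^ q) * (cc - dd)
      = (cc ^ q ^ (t - 1) - dd ^ q) * (aa - bb) := by
    have h := congrArg (fun w : F => w ^ q ^ t) hE
    simp only [mul_pow] at h
    rw [hfrobadd t (aa ^ q ^ (t - 1)) (bb ^ q), hfrobadd t cc dd,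
      hfrobadd t (cc ^ q ^ (t - 1)) (dd ^ q), hfrobadd t aa bb,
      haK', hbA', hcK', hdA', haK, hbA, hcK, hdA] at h
    linear_combination h
  -- the two component equations
  have hI : aa ^ q ^ (t - 1) * cc + bb ^ q * dd
      = cc ^ q ^ (t - 1) * aa + dd ^ q * bb := by
    apply mul_left_cancel₀ htwoF
    linear_combination hE + hEs
  have hII : aa ^ q ^ (t - 1) * dd + bb ^ q * cc
      = cc ^ q ^ (t - 1) * bb + dd ^ q * aa := by
    apply mul_left_cancel₀ htwoF
    linear_combination hE - hEs
  -- norm exponent M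
  have hMkey : ∀ n : ℕ, q * (∑ i ∈ Finset.range n, q ^ i) + 1
      = (∑ i ∈ Finset.range n, q ^ i) + q ^ n := by
    intro n
    induction n with
    | zero => simp
    | succ k ih =>
      rw [Finset.sum_range_succ, pow_succ, Nat.mul_add, Nat.mul_comm (q ^ k) q]
      linarith [ih]
  set M : ℕ := ∑ i ∈ Finset.range t, q ^ i with hMdef
  have hM : q * M + 1 = M + q ^ t := hMkey t
  have hKM : ∀ x : F, x ≠ 0 → x ^ q ^ t = x → (x ^ q) ^ M = x ^ M := by
    intro x hx0 hxK
    have h1 : (x ^ q) ^ M * x = x ^ M * x := by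
      rw [← pow_mul]
      calc x ^ (q * M) * x = x ^ (q * M + 1) := by rw [pow_succ]
        _ = x ^ (M + q ^ t) := by rw [hM]
        _ = x ^ M * x ^ q ^ t := by rw [pow_add]
        _ = x ^ M * x := by rw [hxK]
    exact mul_right_cancel₀ hx0 h1
  have hAM : ∀ x : F, x ≠ 0 → x ^ q ^ t = -x → (x ^ q) ^ M = -(x ^ M) := by
    intro x hx0 hxA
    have h1 : (x ^ q) ^ M * x = (-(x ^ M)) * x := by
      rw [← pow_mul]
      calc x ^ (q * M) * x = x ^ (q * M + 1) := by rw [pow_succ]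
        _ = x ^ (M + q ^ t) := by rw [hM]
        _ = x ^ M * x ^ q ^ t := by rw [pow_add]
        _ = x ^ M * (-x) := by rw [hxA]
        _ = (-(x ^ M)) * x := by ring
    exact mul_right_cancel₀ hx0 h1
  have hKq : ∀ x : F, x ^ q ^ t = x → (x ^ q) ^ q ^ t = x ^ q := by
    intro x hx; rw [pow_right_comm, hx]
  have hKjM : ∀ (j : ℕ) (x : F), x ≠ 0 → x ^ q ^ t = x → (x ^ q ^ j) ^ M = x ^ M := by
    intro j
    induction j with
    | zero => intro x _ _; rw [pow_zero, pow_one]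
    | succ k ih =>
      intro x hx0 hxK
      have h1 : x ^ q ^ (k + 1) = (x ^ q) ^ q ^ k := by
        rw [← pow_mul, ← pow_succ']
      rw [h1, ih (x ^ q) (pow_ne_zero _ hx0) (hKq x hxK), hKM x hx0 hxK]
  -- the basic norm contradiction
  have hcontra : ∀ x1 x2 x3 : F, x1 ≠ 0 → x2 ≠ 0 → x3 ≠ 0 →
      x1 ^ q ^ t = x1 → x2 ^ q ^ t = -x2 → x3 ^ q ^ t = x3 →
      x1 ^ q ^ (t - 1) * x2 * x3 = x2 ^ q * x1 * x3 ^ q → False := by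
    intro x1 x2 x3 h10 h20 h30 h1K h2A h3K heq
    have h := congrArg (fun w : F => w ^ M) heq
    simp only [mul_pow] at h
    rw [hKjM (t - 1) x1 h10 h1K, hAM x2 h20 h2A, hKM x3 h30 h3K] at h
    have hW : x1 ^ M * x2 ^ M * x3 ^ M ≠ 0 :=
      mul_ne_zero (mul_ne_zero (pow_ne_zero _ h10) (pow_ne_zero _ h20)) (pow_ne_zero _ h30)
    have h2 : (2 : F) * (x1 ^ M * x2 ^ M * x3 ^ M) = 0 := by linear_combination h
    rcases mul_eq_zero.mp h2 with h' | h'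
    · exact htwoF h'
    · exact hW h'
  -- divisibility facts
  have htodd : Odd (t - 1) := Nat.Even.sub_odd (by omega) hteven odd_one
  have hdvd1 : ∃ k : ℕ, (q + 1) * k = q ^ (t - 1) + 1 := by
    have h1 : ((q : ℤ) + 1) ∣ ((q : ℤ) ^ (t - 1) + 1) := by
      have hmod : (q : ℤ) ≡ -1 [ZMOD ((q : ℤ) + 1)] := by
        have : ((q : ℤ) + 1) ∣ (-1 - (q : ℤ)) := ⟨-1, by ring⟩
        exact Int.modEq_iff_dvd.mpr this
      have hpow := hmod.pow (t - 1)
      rw [Odd.neg_one_pow htodd] at hpow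
      have := Int.ModEq.dvd hpow
      have h2 : ((q : ℤ) + 1) ∣ (-1 - (q : ℤ) ^ (t - 1)) := this
      have h3 : ((q : ℤ) + 1) ∣ -(-1 - (q : ℤ) ^ (t - 1)) := dvd_neg.mpr h2
      have h4 : -(-1 - (q : ℤ) ^ (t - 1)) = (q : ℤ) ^ (t - 1) + 1 := by ring
      rwa [h4] at h3
    have h2 : ((q + 1 : ℕ) : ℤ) ∣ ((q ^ (t - 1) + 1 : ℕ) : ℤ) := by push_cast; exact h1
    obtain ⟨k, hk⟩ := Int.ofNat_dvd.mp h2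
    exact ⟨k, hk.symm⟩
  have hdvd2 : ∃ m : ℕ, (q + 1) * m + 1 = q ^ t := by
    have h1 : ((q : ℤ) + 1) ∣ ((q : ℤ) ^ t - 1) := by
      have hmod : (q : ℤ) ≡ -1 [ZMOD ((q : ℤ) + 1)] := by
        have : ((q : ℤ) + 1) ∣ (-1 - (q : ℤ)) := ⟨-1, by ring⟩
        exact Int.modEq_iff_dvd.mpr this
      have hpow := hmod.pow t
      rw [Even.neg_one_pow hteven] at hpow
      have h2 : ((q : ℤ) + 1) ∣ (1 - (q : ℤ) ^ t) := Int.ModEq.dvd hpow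
      have h3 : ((q : ℤ) + 1) ∣ -(1 - (q : ℤ) ^ t) := dvd_neg.mpr h2
      have h4 : -(1 - (q : ℤ) ^ t) = (q : ℤ) ^ t - 1 := by ring
      rwa [h4] at h3
    have hqt1 : 1 ≤ q ^ t := Nat.one_le_pow _ _ (by omega)
    have h2 : ((q + 1 : ℕ) : ℤ) ∣ ((q ^ t - 1 : ℕ) : ℤ) := by
      rw [Nat.cast_sub hqt1]; push_cast; exact h1
    obtain ⟨m, hm⟩ := Int.ofNat_dvd.mp h2
    exact ⟨m, by omega⟩
  -- the (q+1)-power contradiction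
  have hcontra2 : ∀ x1 x2 : F, x1 ≠ 0 → x2 ≠ 0 →
      x1 ^ q ^ t = x1 → x2 ^ q ^ t = -x2 →
      x1 ^ q ^ (t - 1) * x1 = x2 ^ (q + 1) → False := by
    obtain ⟨k, hk⟩ := hdvd1
    obtain ⟨m, hm⟩ := hdvd2
    intro x1 x2 h10 h20 h1K h2A heq
    have hx1e : x1 ^ (q ^ (t - 1) + 1) = x2 ^ (q + 1) := by
      rw [pow_add, pow_one]; exact heq
    have hx1k : x1 ^ k ≠ 0 := pow_ne_zero _ h10
    set v := x2 / x1 ^ k with hvdef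
    have hv0 : v ≠ 0 := div_ne_zero h20 hx1k
    have hv1 : v ^ (q + 1) = 1 := by
      rw [hvdef, div_pow, ← pow_mul, Nat.mul_comm k (q + 1), hk, hx1e]
      exact div_self (pow_ne_zero _ h20)
    have hvA : v ^ q ^ t = -v := by
      rw [hvdef, div_pow, pow_right_comm, h1K, h2A, neg_div]
    have hvK : v ^ q ^ t = v := by
      calc v ^ q ^ t = v ^ ((q + 1) * m + 1) := by rw [hm]
        _ = (v ^ (q + 1)) ^ m * v := by rw [pow_succ, pow_mul]
        _ = v := by rw [hv1, one_pow, one_mul]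
    have h2 : (2 : F) * v = 0 := by linear_combination hvA - hvK
    rcases mul_eq_zero.mp h2 with h' | h'
    · exact htwoF h'
    · exact hv0 h'
  -- from fixed by q^(t-1) and q^t to fixed by q
  have hstep : ∀ x : F, x ^ q ^ t = x → x ^ q ^ (t - 1) = x → x ^ q = x := by
    intro x h1 h2
    have h3 := congrArg (fun w : F => w ^ q) h2
    rw [← pow_mul, show q ^ (t - 1) * q = q ^ t by
      rw [← pow_succ]; congr 1; omega] at h3
    rw [h1] at h3
    exact h3.symm
  -- nonvanishing facts
  have h2yne : (2 : F) * y ≠ 0 := mul_ne_zero htwoF hy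
  have h2zne : (2 : F) * z ≠ 0 := mul_ne_zero htwoF hz
  -- main case analysis
  by_cases hb0 : bb = 0
  · have haane : aa ≠ 0 := by
      intro h; apply h2yne; rw [← h2y, h, hb0, add_zero]
    by_cases hd0 : dd = 0
    · -- both y and z in the middle field: conclude
      have hccne : cc ≠ 0 := by
        intro h; apply h2zne; rw [← h2z, h, hd0, add_zero]
      have heq : aa ^ q ^ (t - 1) * cc = cc ^ q ^ (t - 1) * aa := by
        rw [hb0, hd0] at hI
        simpa using hI
      set s := cc / aa with hsdef
      have hsK : s ^ q ^ t = s := by rw [hsdef, div_pow, haK, hcK]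
      have hs' : s ^ q ^ (t - 1) = s := by
        rw [hsdef, div_pow]
        rw [div_eq_div_iff (pow_ne_zero _ haane) haane]
        linear_combination -heq
      have hsq : s ^ q = s := hstep s hsK hs'
      refine ⟨s, hsq, ?_⟩
      apply mul_left_cancel₀ htwoF
      calc 2 * z = cc + dd := h2z.symm
        _ = cc := by rw [hd0, add_zero]
        _ = s * aa := by rw [hsdef, div_mul_cancel₀ cc haane]
        _ = s * (aa + bb) := by rw [hb0, add_zero]
        _ = s * (2 * y) := by rw [h2y]
        _ = 2 * (s * y) := by ring
    · -- bb = 0, dd ≠ 0 : impossible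
      exfalso
      have heq : aa ^ q ^ (t - 1) * dd = dd ^ q * aa := by
        rw [hb0] at hII
        simpa [zero_pow hq0] using hII
      exact hcontra aa dd 1 haane hd0 one_ne_zero haK hdA (one_pow _)
        (by rw [one_pow, mul_one, mul_one]; exact heq)
  · by_cases hd0 : dd = 0
    · -- bb ≠ 0, dd = 0 : impossible
      exfalso
      have hccne : cc ≠ 0 := by
        intro h; apply h2zne; rw [← h2z, h, hd0, add_zero]
      have heq : cc ^ q ^ (t - 1) * bb = bb ^ q * cc := by
        rw [hd0] at hII
        have := hII
        simp only [zero_pow hq0, mul_zero, zero_mul, add_zero, zero_add] at this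
        linear_combination -this
      exact hcontra cc bb 1 hccne hb0 one_ne_zero hcK hbA (one_pow _)
        (by rw [one_pow, mul_one, mul_one]; exact heq)
    · -- bb ≠ 0, dd ≠ 0
      by_cases ha0 : aa = 0
      · by_cases hc0 : cc = 0
        · -- aa = cc = 0
          have heq : bb ^ q * dd = dd ^ q * bb := by
            rw [ha0, hc0] at hI
            simpa [zero_pow hqt0] using hI
          set s := dd / bb with hsdef
          have hsq : s ^ q = s := by
            rw [hsdef, div_pow]
            rw [div_eq_div_iff (pow_ne_zero _ hb0) hb0]
            linear_combination -heq
          refine ⟨s, hsq, ?_⟩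
          apply mul_left_cancel₀ htwoF
          calc 2 * z = cc + dd := h2z.symm
            _ = dd := by rw [hc0, zero_add]
            _ = s * bb := by rw [hsdef, div_mul_cancel₀ dd hb0]
            _ = s * (aa + bb) := by rw [ha0, zero_add]
            _ = s * (2 * y) := by rw [h2y]
            _ = 2 * (s * y) := by ring
        · -- aa = 0, cc ≠ 0 : impossible
          exfalso
          have heq : cc ^ q ^ (t - 1) * bb = bb ^ q * cc := by
            rw [ha0] at hII
            have := hII
            simp only [zero_pow hqt0, zero_mul, mul_zero, add_zero, zero_add] at this
            linear_combination -this
          exact hcontra cc bb 1 hc0 hb0 one_ne_zero hcK hbA (one_pow _)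
            (by rw [one_pow, mul_one, mul_one]; exact heq)
      · by_cases hc0 : cc = 0
        · -- aa ≠ 0, cc = 0 : impossible
          exfalso
          have hddne : dd ≠ 0 := hd0
          have heq : aa ^ q ^ (t - 1) * dd = dd ^ q * aa := by
            rw [hc0] at hII
            have := hII
            simp only [zero_pow hqt0, zero_mul, mul_zero, add_zero, zero_add] at this
            linear_combination this
          exact hcontra aa dd 1 ha0 hddne one_ne_zero haK hdA (one_pow _)
            (by rw [one_pow, mul_one, mul_one]; exact heq)
        · -- main generic case: aa, bb, cc, dd all nonzero
          set s := cc / aa with hsdef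
          set u := dd / bb with hudef
          have hsK : s ^ q ^ t = s := by rw [hsdef, div_pow, haK, hcK]
          have huK : u ^ q ^ t = u := by
            rw [hudef, div_pow, hbA, hdA, neg_div_neg_eq]
          set S := s ^ q ^ (t - 1) with hSdef
          have hSK : S ^ q ^ t = S := by rw [hSdef, pow_right_comm, hsK]
          have hSq : S ^ q = s := by
            rw [hSdef, ← pow_mul, show q ^ (t - 1) * q = q ^ t by
              rw [← pow_succ]; congr 1; omega, hsK]
          set v := u - S with hvdef
          have hvK : v ^ q ^ t = v := by
            rw [hvdef, hfrobsub t, huK, hSK]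
          have hccval : cc = s * aa := (div_mul_cancel₀ cc ha0).symm
          have hddval : dd = u * bb := (div_mul_cancel₀ dd hb0).symm
          have hvq : v ^ q = u ^ q - s := by
            rw [hvdef, hfrobsubq, hSq]
          rw [hccval, hddval, mul_pow, mul_pow] at hII hI
          have hveq : aa ^ q ^ (t - 1) * bb * v = bb ^ q * aa * v ^ q := by
            rw [hvq, hvdef, hSdef]
            linear_combination hII
          by_cases hv0 : v = 0
          · -- u = S
            have huS : u = S := by rwa [hvdef, sub_eq_zero] at hv0
            have huq : u ^ q = s := by rw [huS]; exact hSq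
            rw [huq, huS] at hI
            have hfac : (aa ^ q ^ (t - 1) * aa - bb ^ (q + 1)) * (s - S) = 0 := by
              rw [pow_succ, hSdef]
              rw [hSdef] at hI
              linear_combination hI
            rcases mul_eq_zero.mp hfac with h' | h'
            · exfalso
              exact hcontra2 aa bb ha0 hb0 haK hbA (by linear_combination h')
            · have hsS : s = S := by rwa [sub_eq_zero] at h'
              have hs' : s ^ q ^ (t - 1) = s := by rw [← hSdef, ← hsS]
              have hsq : s ^ q = s := hstep s hsK hs'
              refine ⟨s, hsq, ?_⟩
              apply mul_left_cancel₀ htwoF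
              calc 2 * z = cc + dd := h2z.symm
                _ = s * aa + u * bb := by rw [hccval, hddval]
                _ = s * aa + s * bb := by rw [huS, ← hsS]
                _ = s * (aa + bb) := by ring
                _ = s * (2 * y) := by rw [h2y]
                _ = 2 * (s * y) := by ring
          · exact (hcontra aa bb v ha0 hb0 hv0 haK hbA hvK hveq).elim
end

section
/- Let q ≡ 1 (mod 4), t ≥ 3 odd, n = 2t, and ψ(x) = (x^q + x^{q^{t-1}} - x^{q^{t+1}} + x^{q^{2t-1}})/2 ∈ F_{q^n}[x]. Then ψ is a scattered q-polynomial: for all nonzero y, z ∈ F_{q^n}, if ψ(y)/y = ψ(z)/z then y and z are F_q-linearly dependent. -/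
private lemma geom1 (m : ℕ) : ∀ n : ℕ, (∑ i ∈ Finset.range n, (m+1)^i) * m + 1 = (m+1)^n := by
  intro n
  induction n with
  | zero => simp
  | succ n ih =>
    rw [Finset.sum_range_succ, add_mul, pow_succ]
    calc (∑ i ∈ Finset.range n, (m+1)^i) * m + (m+1)^n * m + 1
        = ((∑ i ∈ Finset.range n, (m+1)^i) * m + 1) + (m+1)^n * m := by ring
      _ = (m+1)^n + (m+1)^n * m := by rw [ih]
      _ = (m+1)^n * (m+1) := by ring

private lemma geom2 (q : ℕ) : ∀ n : ℕ, (∑ i ∈ Finset.range n, q^i) * q + 1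
    = (∑ i ∈ Finset.range n, q^i) + q^n := by
  intro n
  induction n with
  | zero => simp
  | succ n ih =>
    rw [Finset.sum_range_succ, add_mul, pow_succ]
    calc (∑ i ∈ Finset.range n, q^i) * q + q^n * q + 1
        = ((∑ i ∈ Finset.range n, q^i) * q + 1) + q^n * q := by ring
      _ = ((∑ i ∈ Finset.range n, q^i) + q^n) + q^n * q := by rw [ih]

theorem stmt_9 (p r q t : ℕ) (hp : p.Prime) (hr : 0 < r)
    (hq : q = p ^ r) (hq4 : q % 4 = 1) (ht : 3 ≤ t) (htodd : Odd t)
    (F : Type) [Field F] [Fintype F] (hF : Fintype.card F = q ^ (2 * t))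
    (ψ : F → F)
    (hψ : ∀ x : F, ψ x = (x ^ q ^ 1 + x ^ q ^ (t - 1) - x ^ q ^ (t + 1) + x ^ q ^ (2 * t - 1)) / 2) :
    ∀ y z : F, y ≠ 0 → z ≠ 0 → ψ y / y = ψ z / z →
      ∃ c : F, c ^ q = c ∧ z = c * y := by
  -- basic numerology
  have hq2 : 2 ≤ q := by
    rw [hq]
    calc 2 = 2^1 := rfl
    _ ≤ p^r := Nat.pow_le_pow_left hp.two_le r |>.trans' (by
        exact Nat.pow_le_pow_right (by omega) hr)
  obtain ⟨k, hkq, hk1⟩ : ∃ k, q = 4*k+1 ∧ 1 ≤ k := ⟨q/4, by omega, by omega⟩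
  have hqodd : Odd q := ⟨2*k, by omega⟩
  have hqjodd : ∀ j : ℕ, Odd (q^j) := fun j => hqodd.pow
  -- characteristic
  haveI hring := ringChar.charP F
  have hcprime : (ringChar F).Prime := CharP.char_is_prime F (ringChar F)
  have hcp : ringChar F = p := by
    obtain ⟨n0, -, hcard⟩ := FiniteField.card F (ringChar F)
    have h1 : (ringChar F) ∣ p ^ (r * (2*t)) := by
      rw [pow_mul, ← hq, ← hF, hcard]
      exact dvd_pow_self _ n0.ne_zero
    have := hcprime.dvd_of_dvd_pow h1
    exact (Nat.prime_dvd_prime_iff_eq hcprime hp).mp this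
  haveI hchar : CharP F p := by rw [← hcp]; exact hring
  haveI := Fact.mk hp
  have hpodd : p ≠ 2 := by
    intro h2
    have h3 : Odd (p^r) := hq ▸ hqodd
    have h4 : Even (p^r) := Nat.even_pow.mpr ⟨by rw [h2]; exact even_two, by omega⟩
    rw [Nat.even_iff] at h4
    rw [Nat.odd_iff] at h3
    omega
  -- Frobenius-type lemmas
  have hfrob : ∀ (j : ℕ) (x y : F), (x + y) ^ q ^ j = x ^ q ^ j + y ^ q ^ j := by
    intro j x y
    have hqe : q ^ j = p ^ (r * j) := by rw [hq, ← pow_mul]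
    rw [hqe]
    exact add_pow_char_pow x y p (r*j)
  have hfneg : ∀ (j : ℕ) (x : F), (-x) ^ q ^ j = -(x ^ q ^ j) := fun j x => (hqjodd j).neg_pow x
  have hfsub : ∀ (j : ℕ) (x y : F), (x - y) ^ q ^ j = x ^ q ^ j - y ^ q ^ j := by
    intro j x y
    rw [sub_eq_add_neg, hfrob, hfneg, ← sub_eq_add_neg]
  have h2fix : ∀ j : ℕ, (2 : F) ^ q ^ j = 2 := by
    intro j
    have h1 : ((1:F) + 1) ^ q ^ j = 1 + 1 := by rw [hfrob, one_pow]
    calc (2:F)^q^j = ((1:F)+1)^q^j := by norm_num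
      _ = 1+1 := h1
      _ = 2 := by norm_num
  have h2ne : (2 : F) ≠ 0 := by
    have : ((2:ℕ) : F) ≠ 0 := by
      rw [Ne, CharP.cast_eq_zero_iff F p]
      intro hdvd
      exact hpodd ((Nat.prime_dvd_prime_iff_eq hp Nat.prime_two).mp hdvd)
    simpa using this
  have hcardx : ∀ x : F, x ^ q ^ (2*t) = x := by
    intro x; rw [← hF]; exact FiniteField.pow_card x
  -- power juggling
  have hps : ∀ (x : F) (m n : ℕ), (x ^ m) ^ n = (x ^ n) ^ m := by
    intro x m n; rw [← pow_mul, mul_comm, pow_mul]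
  have hxx : ∀ x : F, (x ^ q ^ t) ^ q ^ t = x := by
    intro x
    rw [← pow_mul, ← pow_add]
    have : t + t = 2*t := by omega
    rw [this]; exact hcardx x
  -- cyclic group: δ with δ^(q^t) = -δ, and i with i² = -1, i^q = i
  obtain ⟨ζ, hζord⟩ := IsCyclic.exists_ofOrder_eq_natCard (α := Fˣ)
  obtain ⟨l, hl, hl2⟩ : ∃ l, q^t = 2*l + 1 ∧ 2 ≤ l := by
    obtain ⟨l, hl⟩ := hqjodd t
    refine ⟨l, by omega, ?_⟩
    have : q ≤ q ^ t := Nat.le_self_pow (by omega) q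
    omega
  have hq2t : q^(2*t) = 4*(l*l) + 4*l + 1 := by
    have h1 : q^(2*t) = q^t * q^t := by rw [← pow_add]; congr 1; omega
    rw [h1, hl]; ring
  have hζ : orderOf ζ = 4*(l*l) + 4*l := by
    rw [hζord, Nat.card_units, Nat.card_eq_fintype_card, hF, hq2t]
    omega
  have hζ0 : (ζ : F) ≠ 0 := Units.ne_zero ζ
  have hη2 : (ζ:Fˣ) ^ (2*(l*l) + 2*l) * ζ ^ (2*(l*l) + 2*l) = 1 := by
    rw [← pow_add, show (2*(l*l)+2*l) + (2*(l*l)+2*l) = 4*(l*l)+4*l from by ring, ← hζ]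
    exact pow_orderOf_eq_one ζ
  have hηne : (ζ:Fˣ) ^ (2*(l*l) + 2*l) ≠ 1 := by
    intro h
    have hd := orderOf_dvd_of_pow_eq_one h
    rw [hζ] at hd
    have hpos : 0 < 2*(l*l) + 2*l := by positivity
    have := Nat.le_of_dvd hpos hd
    nlinarith
  have hηF : ((ζ:F)) ^ (2*(l*l) + 2*l) = -1 := by
    have h2 : ((ζ:F) ^ (2*(l*l)+2*l)) * ((ζ:F) ^ (2*(l*l)+2*l)) = 1 := by
      rw [← Units.val_pow_eq_pow_val, ← Units.val_mul, hη2, Units.val_one]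
    have h1 : ((ζ:F)) ^ (2*(l*l)+2*l) ≠ 1 := by
      intro h
      apply hηne
      apply Units.ext
      rw [Units.val_pow_eq_pow_val, h, Units.val_one]
    rcases mul_self_eq_one_iff.mp h2 with h | h
    · exact absurd h h1
    · exact h
  have hζone : ((ζ:F)) ^ (4*(l*l) + 4*l) = 1 := by
    rw [← Units.val_pow_eq_pow_val, ← hζ, pow_orderOf_eq_one, Units.val_one]
  obtain ⟨δ, hδdef⟩ : ∃ d : F, d = (ζ:F) ^ (l+1) := ⟨_, rfl⟩
  have hδ0 : δ ≠ 0 := by rw [hδdef]; exact pow_ne_zero _ hζ0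
  have hδt : δ ^ q ^ t = -δ := by
    rw [hδdef, ← pow_mul, hl, show (l+1)*(2*l+1) = (2*(l*l)+2*l) + (l+1) from by ring,
      pow_add, hηF]
    ring
  -- the element i with i*i = -1, i^q = i
  obtain ⟨S, hSdef⟩ : ∃ S : ℕ, S = ∑ i ∈ Finset.range (2*t), q^i := ⟨_, rfl⟩
  have hS : S * (4*k) + 1 = q^(2*t) := by
    rw [hSdef, hkq]
    exact geom1 (4*k) (2*t)
  have hS4 : S * (4*k) = 4*(l*l) + 4*l := by
    have h5 : S*(4*k) + 1 = (4*(l*l)+4*l) + 1 := by rw [hS, hq2t]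
    exact Nat.add_right_cancel h5
  have hSk : S * k = l*l + l := by
    have h4 : 4 * (S*k) = 4 * (l*l+l) := by
      calc 4*(S*k) = S*(4*k) := by ring
        _ = 4*(l*l) + 4*l := hS4
        _ = 4*(l*l+l) := by ring
    omega
  obtain ⟨i, hidef⟩ : ∃ i : F, i = (ζ:F) ^ (S*k) := ⟨_, rfl⟩
  have hii : i * i = -1 := by
    rw [hidef, ← pow_add, show S*k + S*k = 2*(S*k) from by ring, hSk,
      show 2*(l*l+l) = 2*(l*l)+2*l from by ring]
    exact hηF
  have hiq : i ^ q = i := by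
    rw [hidef, ← pow_mul, hkq, show S*k*(4*k+1) = S*k + (4*(l*l)+4*l)*k from by
      calc S*k*(4*k+1) = S*k + (S*(4*k))*k := by ring
        _ = S*k + (4*(l*l)+4*l)*k := by rw [hS4]]
    rw [pow_add, pow_mul ((ζ:F)) (4*(l*l)+4*l) k, hζone, one_pow, mul_one]
  -- the norm exponent s
  obtain ⟨s, hsdef⟩ : ∃ s : ℕ, s = ∑ i ∈ Finset.range t, q^i := ⟨_, rfl⟩
  have hsq : s*q + 1 = s + q^t := by rw [hsdef]; exact geom2 q t
  have hspos : 0 < s := by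
    rw [hsdef]
    apply Finset.sum_pos (fun i _ => pow_pos (by omega) i)
    rw [Finset.nonempty_range_iff]; omega
  have hfixq : ∀ (c : F) (j : ℕ), c^q = c → c^(q^j) = c := by
    intro c j hc
    induction j with
    | zero => simp
    | succ j ih => rw [pow_succ, pow_mul, ih, hc]
  have hNfix : ∀ x : F, x ^ q^t = x → (x^s)^q = x^s := by
    intro x hx
    rcases eq_or_ne x 0 with rfl | hx0
    · rw [zero_pow hspos.ne', zero_pow (by omega : q ≠ 0)]
    · have h1 : (x^s)^q * x = x^s * x := by
        rw [← pow_mul, ← pow_succ, hsq, pow_add, hx]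
      exact mul_right_cancel₀ hx0 h1
  have hδs : (δ^s)^q = -(δ^s) := by
    have h1 : (δ^s)^q * δ = (-(δ^s)) * δ := by
      rw [← pow_mul, ← pow_succ, hsq, pow_add, hδt]
      ring
    exact mul_right_cancel₀ hδ0 h1
  have hδsne : δ^s ≠ 0 := pow_ne_zero _ hδ0
  -- the element e with δ^q = δ*e
  obtain ⟨e, hedef⟩ : ∃ e : F, e = δ^q * δ⁻¹ := ⟨_, rfl⟩
  have hδq : δ^q = δ * e := by rw [hedef]; field_simp
  have he0 : e ≠ 0 := by
    rw [hedef]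
    exact mul_ne_zero (pow_ne_zero _ hδ0) (inv_ne_zero hδ0)
  have hqqt : ∀ x : F, (x^q)^(q^t) = (x^(q^t))^q := fun x => hps x q (q^t)
  have hfnegq : ∀ x : F, (-x)^q = -(x^q) := fun x => hqodd.neg_pow x
  have hfaddq : ∀ x y : F, (x+y)^q = x^q + y^q := by
    intro x y
    have := hfrob 1 x y
    simpa [pow_one] using this
  have hfsubq : ∀ x y : F, (x-y)^q = x^q - y^q := by
    intro x y
    have := hfsub 1 x y
    simpa [pow_one] using this
  have heK : e^(q^t) = e := by
    rw [hedef, mul_pow, inv_pow, hqqt, hδt, hfnegq, inv_neg]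
    ring
  have hes : e^s = -1 := by
    have hqs : (δ^q)^s = -(δ^s) := by rw [hps, hδs]
    rw [hedef, mul_pow, inv_pow, hqs]
    field_simp
  have hqt0 : q^t ≠ 0 := (pow_pos (by omega : 0 < q) t).ne'
  have hcomp : ∀ (a b : ℕ) (x : F), (x^(q^a))^(q^b) = x^(q^(a+b)) := by
    intro a b x; rw [← pow_mul, ← pow_add]
  have hcompq : ∀ (a : ℕ) (x : F), (x^(q^a))^q = x^(q^(a+1)) := by
    intro a x; rw [← pow_mul, ← pow_succ]
  have h2fixq : (2:F)^q = 2 := by simpa [pow_one] using h2fix 1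
  have hδqne : δ^q ≠ 0 := pow_ne_zero _ hδ0
  -- decomposition of an arbitrary element
  have hdec : ∀ x : F, ∃ u w : F, u^(q^t) = u ∧ w^(q^t) = w ∧ x = u + δ*w ∧
      ψ x = u^(q^(t-1)) + δ^q * w^q := by
    intro x
    refine ⟨(x + x^(q^t))/2, (x - x^(q^t))/(2*δ), ?_, ?_, ?_, ?_⟩
    · rw [div_pow, hfrob, h2fix, hxx]
      ring
    · rw [div_pow, hfsub, mul_pow, h2fix, hxx, hδt]
      rw [div_eq_div_iff (mul_ne_zero h2ne (neg_ne_zero.mpr hδ0)) (mul_ne_zero h2ne hδ0)]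
      ring
    · field_simp
      ring
    · have e1 : ((x + x^(q^t))/2)^(q^(t-1)) = (x^(q^(t-1)) + x^(q^(2*t-1))) / 2 := by
        rw [div_pow, hfrob, h2fix, hcomp t (t-1), show t+(t-1) = 2*t-1 from by omega]
      have e2 : ((x - x^(q^t))/(2*δ))^q = (x^q - x^(q^(t+1))) / (2 * δ^q) := by
        rw [div_pow, hfsubq, mul_pow, h2fixq, hcompq t]
      rw [hψ x, e1, e2, pow_one]
      field_simp
      ring
  -- uniqueness of decomposition
  have huniq : ∀ R Sv : F, R^(q^t) = R → Sv^(q^t) = Sv → R + δ*Sv = 0 → R = 0 ∧ Sv = 0 := by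
    intro R Sv hR hSv h0
    have h1 : R + -δ*Sv = 0 := by
      have h1' : (R + δ*Sv)^(q^t) = 0 := by rw [h0]; exact zero_pow hqt0
      rw [hfrob, mul_pow, hR, hSv, hδt] at h1'
      exact h1'
    have hSv0 : Sv = 0 := by
      have h2 : (2:F) * (δ * Sv) = 0 := by linear_combination h0 - h1
      rcases mul_eq_zero.mp h2 with h | h
      · exact absurd h h2ne
      · rcases mul_eq_zero.mp h with h | h
        · exact absurd h hδ0
        · exact h
    refine ⟨?_, hSv0⟩
    rw [hSv0, mul_zero, add_zero] at h0
    exact h0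
  -- main body
  intro y z hy hz hyz
  obtain ⟨u1, w1, hu1K, hw1K, hy_dec, hψy⟩ := hdec y
  obtain ⟨u2, w2, hu2K, hw2K, hz_dec, hψz⟩ := hdec z
  obtain ⟨m, hmdef⟩ : ∃ m : F, m = ψ y / y := ⟨_, rfl⟩
  have hmy : ψ y = m * y := by rw [hmdef]; field_simp
  have hmz : ψ z = m * z := by rw [hmdef, hyz]; field_simp
  obtain ⟨a, b, haK, hbK, hm_dec, -⟩ := hdec m
  have hKd : (δ^2)^(q^t) = δ^2 := by rw [hps, hδt]; ring
  have hKfrob : ∀ (x : F) (j : ℕ), x^(q^t) = x → (x^(q^j))^(q^t) = x^(q^j) := by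
    intro x j hx
    rw [← pow_mul, mul_comm, pow_mul, hx]
  have heqs : ∀ x u w : F, u^(q^t) = u → w^(q^t) = w → x = u + δ*w →
      ψ x = u^(q^(t-1)) + δ^q * w^q → ψ x = m * x →
      u^(q^(t-1)) = a*u + δ^2*(b*w) ∧ e*w^q = b*u + a*w := by
    intro x u w huK hwK hxd hψx hmx
    have master : u^(q^(t-1)) + (δ*e) * w^q = (a + δ*b) * (u + δ*w) := by
      rw [← hδq, ← hψx, ← hxd, ← hm_dec, hmx]
    have hRK : (u^(q^(t-1)) - (a*u + δ^2*(b*w)))^(q^t) = u^(q^(t-1)) - (a*u + δ^2*(b*w)) := by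
      rw [hfsub, hfrob, mul_pow, mul_pow, mul_pow, hKfrob u (t-1) huK, haK, hbK, huK, hwK, hKd]
    have hSK : (e*w^q - (b*u + a*w))^(q^t) = e*w^q - (b*u + a*w) := by
      rw [hfsub, hfrob, mul_pow, mul_pow, mul_pow, heK, hqqt, hwK, haK, hbK, huK]
    have hsum : (u^(q^(t-1)) - (a*u + δ^2*(b*w))) + δ*(e*w^q - (b*u + a*w)) = 0 := by
      linear_combination master
    obtain ⟨hA, hB⟩ := huniq _ _ hRK hSK hsum
    constructor
    · linear_combination hA
    · linear_combination hB
  obtain ⟨h1y, h2y⟩ := heqs y u1 w1 hu1K hw1K hy_dec hψy hmy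
  obtain ⟨h1z, h2z⟩ := heqs z u2 w2 hu2K hw2K hz_dec hψz hmz
  have hqtm1 : q^(t-1) ≠ 0 := (pow_pos (by omega : 0 < q) (t-1)).ne'
  by_cases hb : b = 0
  · -- case b = 0
    rw [hb] at h1y h2y h1z h2z
    simp only [zero_mul, mul_zero, add_zero, zero_add] at h1y h2y h1z h2z
    by_cases ha : a = 0
    · exfalso
      rw [ha] at h1y h2y
      simp only [zero_mul, mul_zero, add_zero, zero_add] at h1y h2y
      have hu10 : u1 = 0 := pow_eq_zero_iff hqtm1 |>.mp h1y
      have hw10 : w1 = 0 := by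
        rcases mul_eq_zero.mp h2y with h | h
        · exact absurd h he0
        · exact pow_eq_zero_iff (by omega : q ≠ 0) |>.mp h
      apply hy
      rw [hy_dec, hu10, hw10]
      ring
    · -- a ≠ 0
      have claimA : ∀ u' w' : F, u'^(q^t) = u' → u' ≠ 0 → u'^(q^(t-1)) = a*u' →
          w'^(q^t) = w' → w' ≠ 0 → e*w'^q = a*w' → False := by
        intro u' w' huK' hu0 h1' hwK' hw0 h2'
        have hu_s : (u'^s)^q = u'^s := hNfix u' huK'
        have ha1 : a^s = 1 := by
          have h3 : (u'^(q^(t-1)))^s = (a*u')^s := by rw [h1']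
          rw [mul_pow, hps u' (q^(t-1)) s, hfixq (u'^s) (t-1) hu_s] at h3
          have h4 : 1 * u'^s = a^s * u'^s := by rw [one_mul]; exact h3
          exact (mul_right_cancel₀ (pow_ne_zero s hu0) h4).symm
        have ha2 : a^s = -1 := by
          have h3 : (e*w'^q)^s = (a*w')^s := by rw [h2']
          rw [mul_pow, mul_pow, hps w' q s, hNfix w' hwK', hes] at h3
          exact (mul_right_cancel₀ (pow_ne_zero s hw0) h3).symm
        rw [ha1] at ha2
        apply h2ne
        linear_combination ha2
      by_cases hw1 : w1 = 0
      · have hu10 : u1 ≠ 0 := by intro h; apply hy; rw [hy_dec, h, hw1]; ring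
        have hw20 : w2 = 0 := by
          by_contra hw2
          exact claimA u1 w2 hu1K hu10 h1y hw2K hw2 h2z
        have hu20 : u2 ≠ 0 := by intro h; apply hz; rw [hz_dec, h, hw20]; ring
        refine ⟨u2 * u1⁻¹, ?_, ?_⟩
        · have hcK : (u2*u1⁻¹)^(q^t) = u2*u1⁻¹ := by rw [mul_pow, inv_pow, hu1K, hu2K]
          have hcτ : (u2*u1⁻¹)^(q^(t-1)) = u2*u1⁻¹ := by
            rw [mul_pow, inv_pow, h1y, h1z]
            field_simp
          have h6 : ((u2*u1⁻¹)^(q^(t-1)))^q = (u2*u1⁻¹)^(q^t) := by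
            rw [hcompq, show t-1+1 = t from by omega]
          rw [hcτ, hcK] at h6
          exact h6
        · rw [hz_dec, hy_dec, hw1, hw20]
          field_simp
          ring
      · have hu10 : u1 = 0 := by
          by_contra h
          exact claimA u1 w1 hu1K h h1y hw1K hw1 h2y
        have hu20 : u2 = 0 := by
          by_contra h
          exact claimA u2 w1 hu2K h h1z hw1K hw1 h2y
        have hw20 : w2 ≠ 0 := by intro h; apply hz; rw [hz_dec, hu20, h]; ring
        have h5 : w2^q * w1 = w1^q * w2 := by
          apply mul_left_cancel₀ he0
          linear_combination w1 * h2z - w2 * h2y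
        refine ⟨w2 * w1⁻¹, ?_, ?_⟩
        · rw [mul_pow, inv_pow]
          field_simp
          linear_combination h5
        · rw [hz_dec, hy_dec, hu10, hu20]
          field_simp
          ring
  · -- case b ≠ 0
    have hqne : q ≠ 0 := by omega
    have hw1ne : w1 ≠ 0 := by
      intro h
      rw [h] at h2y
      have hu10 : u1 = 0 := by
        have h0 : b*u1 = 0 := by
          rw [zero_pow hqne, mul_zero] at h2y
          linear_combination -h2y
        rcases mul_eq_zero.mp h0 with h'|h'
        · exact absurd h' hb
        · exact h'
      apply hy; rw [hy_dec, hu10, h]; ring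
    have hw2ne : w2 ≠ 0 := by
      intro h
      rw [h] at h2z
      have hu20 : u2 = 0 := by
        have h0 : b*u2 = 0 := by
          rw [zero_pow hqne, mul_zero] at h2z
          linear_combination -h2z
        rcases mul_eq_zero.mp h0 with h'|h'
        · exact absurd h' hb
        · exact h'
      apply hz; rw [hz_dec, hu20, h]; ring
    have hwq1 : ∀ w : F, w^(q^t) = w → (w^q)^(q^(t-1)) = w := by
      intro w hw
      rw [← pow_mul, show q * q^(t-1) = q^t from by
        rw [← pow_succ']; congr 1; omega, hw]
    have star : ∀ w u : F, w^(q^t) = w → u^(q^(t-1)) = a*u + δ^2*(b*w) → e*w^q = b*u + a*w →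
        (a^(q^(t-1)))^q * b^q * w + (b^(q^(t-1)))^q * ((a*e))^q * w^(q^2)
        = ((b*e^(q^(t-1)) + b^(q^(t-1))*a^2) - δ^2*b^2*b^(q^(t-1)))^q * w^q := by
      intro w u hwK h1 h2
      have h3 : (e*w^q)^(q^(t-1)) = (b*u + a*w)^(q^(t-1)) := by rw [h2]
      rw [mul_pow, hfrob, mul_pow, mul_pow, hwq1 w hwK, h1] at h3
      have star1 : a^(q^(t-1)) * b * w^(q^(t-1)) + b^(q^(t-1))*(a*e) * w^q
          = ((b*e^(q^(t-1)) + b^(q^(t-1))*a^2) - δ^2*b^2*b^(q^(t-1))) * w := by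
        linear_combination b^(q^(t-1))*a*h2 - b*h3
      have star2 : (a^(q^(t-1)) * b * w^(q^(t-1)) + b^(q^(t-1))*(a*e) * w^q)^q
          = (((b*e^(q^(t-1)) + b^(q^(t-1))*a^2) - δ^2*b^2*b^(q^(t-1))) * w)^q := by
        rw [star1]
      rw [hfaddq, mul_pow, mul_pow, mul_pow (b^(q^(t-1)) * (a*e)) (w^q) q,
        mul_pow (b^(q^(t-1))) (a*e) q, mul_pow _ w q, hcompq (t-1) w,
        show t-1+1 = t from by omega, hwK, show (w^q)^q = w^(q^2) from by
          rw [← pow_mul, ← pow_two]] at star2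
      exact star2
    have st1 := star w1 u1 hw1K h1y h2y
    have st2 := star w2 u2 hw2K h1z h2z
    by_cases ha : a = 0
    · exfalso
      rw [ha] at st1
      simp only [zero_pow hqtm1, zero_pow hqne, zero_pow (by norm_num : (2:ℕ) ≠ 0),
        zero_mul, mul_zero, add_zero, zero_add] at st1
      have hC : b*e^(q^(t-1)) - δ^2*b^2*b^(q^(t-1)) = 0 := by
        have h7 : (b*e^(q^(t-1)) - δ^2*b^2*b^(q^(t-1)))^q * w1^q = 0 := by
          linear_combination -st1
        rcases mul_eq_zero.mp h7 with h'|h'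
        · exact pow_eq_zero_iff hqne |>.mp h'
        · exact absurd (pow_eq_zero_iff hqne |>.mp h') hw1ne
      have hbs_fix : (b^s)^q = b^s := hNfix b hbK
      have hEs : (e^(q^(t-1)))^s = -1 := by
        rw [hps e (q^(t-1)) s, hes]
        exact (hqjodd (t-1)).neg_one_pow
      have hBs : (b^(q^(t-1)))^s = b^s := by
        rw [hps b (q^(t-1)) s, hfixq (b^s) (t-1) hbs_fix]
      have h8 : (b*e^(q^(t-1)))^s = (δ^2*b^2*b^(q^(t-1)))^s := by
        rw [show b*e^(q^(t-1)) = δ^2*b^2*b^(q^(t-1)) from by linear_combination hC]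
      rw [mul_pow, mul_pow, mul_pow, hEs, hBs, hps δ 2 s, hps b 2 s] at h8
      have hbsne : b^s ≠ 0 := pow_ne_zero _ hb
      have h9 : (δ^s*b^s)^2 = -1 := by
        have h8' : (δ^s*b^s)^2 * b^s = (-1) * b^s := by linear_combination -h8
        exact mul_right_cancel₀ hbsne h8'
      have h10 : (δ^s*b^s - i) * (δ^s*b^s + i) = 0 := by linear_combination h9 - hii
      have hXq : (δ^s*b^s)^q = -(δ^s*b^s) := by rw [mul_pow, hδs, hbs_fix]; ring
      have hcontr : ∀ j : F, j^q = j → δ^s*b^s = j → False := by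
        intro j hjq hX
        have hq1 : (δ^s*b^s)^q = j^q := by rw [hX]
        rw [hXq, hjq, hX] at hq1
        have hj0 : j = 0 := by
          have h2j : (2:F)*j = 0 := by linear_combination -hq1
          rcases mul_eq_zero.mp h2j with h'|h'
          · exact absurd h' h2ne
          · exact h'
        exact (mul_ne_zero hδsne hbsne) (hX.trans hj0)
      rcases mul_eq_zero.mp h10 with h'|h'
      · exact hcontr i hiq (by linear_combination h')
      · exact hcontr (-i) (by rw [hfnegq, hiq]) (by linear_combination h')
    · -- a ≠ 0
      obtain ⟨h', hh'def⟩ : ∃ h' : F, h' = w1*w2^q - w1^q*w2 := ⟨_, rfl⟩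
      have hw12 : w1*w2^q = w1^q*w2 := by
        have hh : h' = 0 := by
          by_contra hne
          have hKh : h'^(q^t) = h' := by
            rw [hh'def, hfsub, mul_pow, mul_pow, hqqt, hqqt, hw1K, hw2K]
          have key : ((a^(q^(t-1)))^q * b^q) * h' = ((b^(q^(t-1)))^q * ((a*e))^q) * h'^q := by
            have hhq : h'^q = w1^q*w2^(q^2) - w1^(q^2)*w2^q := by
              rw [hh'def, hfsubq, mul_pow, mul_pow,
                show (w2^q)^q = w2^(q^2) from by rw [← pow_mul, ← pow_two],
                show (w1^q)^q = w1^(q^2) from by rw [← pow_mul, ← pow_two]]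
            rw [hhq, hh'def]
            linear_combination w2^q * st1 - w1^q * st2
          have hhs : (h'^s)^q = h'^s := hNfix h' hKh
          have hhsne : h'^s ≠ 0 := pow_ne_zero _ hne
          have hγs : (((a^(q^(t-1)))^q * b^q))^s = a^s*b^s := by
            calc ((a^(q^(t-1)))^q * b^q)^s
                = (((a^(q^(t-1)) * b))^q)^s := by rw [← mul_pow]
              _ = (((a^(q^(t-1)) * b))^s)^q := hps _ q s
              _ = ((a^(q^(t-1)))^s * b^s)^q := by rw [mul_pow]
              _ = ((a^s)^(q^(t-1)) * b^s)^q := by rw [hps a (q^(t-1)) s]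
              _ = (a^s * b^s)^q := by rw [hfixq (a^s) (t-1) (hNfix a haK)]
              _ = (a^s)^q * (b^s)^q := mul_pow _ _ _
              _ = a^s * b^s := by rw [hNfix a haK, hNfix b hbK]
          have hαs : ((b^(q^(t-1)))^q * ((a*e))^q)^s = -(a^s*b^s) := by
            calc ((b^(q^(t-1)))^q * (a*e)^q)^s
                = (((b^(q^(t-1)) * (a*e)))^q)^s := by rw [← mul_pow]
              _ = (((b^(q^(t-1)) * (a*e)))^s)^q := hps _ q s
              _ = ((b^(q^(t-1)))^s * (a^s*e^s))^q := by rw [mul_pow, mul_pow a e s]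
              _ = ((b^s)^(q^(t-1)) * (a^s*e^s))^q := by rw [hps b (q^(t-1)) s]
              _ = (b^s * (a^s*e^s))^q := by rw [hfixq (b^s) (t-1) (hNfix b hbK)]
              _ = (b^s * (a^s*(-1)))^q := by rw [hes]
              _ = (-(a^s*b^s))^q := by rw [show b^s * (a^s*(-1:F)) = -(a^s*b^s) from by ring]
              _ = -((a^s*b^s)^q) := hfnegq _
              _ = -((a^s)^q * (b^s)^q) := by rw [mul_pow]
              _ = -(a^s*b^s) := by rw [hNfix a haK, hNfix b hbK]
          have keyS : (((a^(q^(t-1)))^q * b^q) * h')^s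
              = (((b^(q^(t-1)))^q * ((a*e))^q) * h'^q)^s := by rw [key]
          rw [mul_pow ((a^(q^(t-1)))^q * b^q) h' s, mul_pow ((b^(q^(t-1)))^q * ((a*e))^q) (h'^q) s,
            hγs, hαs, hps h' q s, hhs] at keyS
          have h11 : a^s*b^s = -(a^s*b^s) := mul_right_cancel₀ hhsne keyS
          have h12 : (2:F) * (a^s*b^s) = 0 := by linear_combination h11
          rcases mul_eq_zero.mp h12 with h''|h''
          · exact h2ne h''
          · rcases mul_eq_zero.mp h'' with h3|h3
            · exact absurd h3 (pow_ne_zero s ha)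
            · exact absurd h3 (pow_ne_zero s hb)
        linear_combination hh'def.symm.trans hh
      have hc : (w2*w1⁻¹)^q = w2*w1⁻¹ := by
        rw [mul_pow, inv_pow]
        field_simp
        linear_combination hw12
      have hw2c : w2 = (w2*w1⁻¹) * w1 := by field_simp
      have hw2q : w2^q = (w2*w1⁻¹) * w1^q := by
        calc w2^q = ((w2*w1⁻¹)*w1)^q := by rw [← hw2c]
          _ = (w2*w1⁻¹)^q * w1^q := mul_pow _ _ _
          _ = (w2*w1⁻¹) * w1^q := by rw [hc]
      have hu2c : u2 = (w2*w1⁻¹) * u1 := by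
        apply mul_left_cancel₀ hb
        linear_combination -h2z + (w2*w1⁻¹)*h2y + e*hw2q - a*hw2c
      refine ⟨w2*w1⁻¹, hc, ?_⟩
      rw [hz_dec, hy_dec]
      linear_combination hu2c + δ*hw2c
end

section
/- Let q be an odd prime power, t ≥ 3, n = 2t, and ψ the map on F_{q^n} defined above. If gcd(k, t) > 1 for some 1 ≤ k < 2t, then ψ^{(k)} is not a scattered q-polynomial. -/
theorem stmt_10 (p r q t k : ℕ) (hp : p.Prime) (hpodd : Odd p) (hr : 0 < r)
    (hq : q = p ^ r) (ht : 3 ≤ t) (hk1 : 1 ≤ k) (hk2 : k < 2 * t)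
    (hgcd : 1 < Nat.gcd k t)
    (F : Type) [Field F] [Fintype F] (hF : Fintype.card F = q ^ (2 * t))
    (ψ : F → F)
    (hψ : ∀ x : F, ψ x = (x ^ q ^ 1 + x ^ q ^ (t - 1) - x ^ q ^ (t + 1) + x ^ q ^ (2 * t - 1)) / 2) :
    ¬ (∀ y z : F, y ≠ 0 → z ≠ 0 → ψ^[k] y / y = ψ^[k] z / z →
        ∃ c : F, c ^ q = c ∧ z = c * y) := by
  classical
  set d := Nat.gcd k t with hd
  have hdt : d ∣ t := Nat.gcd_dvd_right k t
  have hdk : d ∣ k := Nat.gcd_dvd_left k t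
  have hd2t : d ∣ 2 * t := hdt.mul_left 2
  have hdle : d ≤ t := Nat.le_of_dvd (by omega) hdt
  have hpmod : p % 2 = 1 := Nat.odd_iff.mp hpodd
  have hp3 : 3 ≤ p := by have := hp.two_le; omega
  have hq3 : 3 ≤ q := by
    have : p ≤ p ^ r := Nat.le_self_pow (by omega) p
    omega
  -- characteristic facts
  have hcard0 : ((p : F)) = 0 := by
    have h0 := FiniteField.cast_card_eq_zero F
    rw [hF, hq] at h0
    push_cast at h0
    have hr2t : r * (2 * t) ≠ 0 := by positivity
    rw [← pow_mul] at h0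
    exact pow_eq_zero_iff hr2t |>.mp h0
  have h2 : (2 : F) ≠ 0 := by
    intro h2
    have hc : CharP F (ringChar F) := ringChar.charP F
    have hdp : ringChar F ∣ p := (CharP.cast_eq_zero_iff F (ringChar F) p).mp hcard0
    have hd2 : ringChar F ∣ 2 := by
      have : ((2 : ℕ) : F) = 0 := by push_cast; exact h2
      exact (CharP.cast_eq_zero_iff F (ringChar F) 2).mp this
    rcases hp.eq_one_or_self_of_dvd _ hdp with h1 | hpp
    · have : ((1 : ℕ) : F) = 0 := (CharP.cast_eq_zero_iff F (ringChar F) 1).mpr (h1 ▸ dvd_rfl)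
      simp at this
    · rw [hpp] at hd2
      have := Nat.le_of_dvd (by norm_num) hd2
      omega
  -- set S facts
  have hmemS : ∀ (x : F) (m : ℕ), x ^ q ^ d = x → (x ^ m) ^ q ^ d = x ^ m := by
    intro x m hx
    rw [← pow_mul, mul_comm, pow_mul, hx]
  have hSmul : ∀ (x : F), x ^ q ^ d = x → ∀ m, x ^ q ^ (d * m) = x := by
    intro x hx m
    induction m with
    | zero => simp
    | succ n ih => rw [Nat.mul_succ, pow_add, pow_mul, ih, hx]
  have hSdvd : ∀ (x : F), x ^ q ^ d = x → ∀ j, d ∣ j → x ^ q ^ j = x := by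
    rintro x hx j ⟨m, rfl⟩
    exact hSmul x hx m
  have hψS : ∀ x : F, x ^ q ^ d = x → ψ x = x ^ q ^ (d - 1) := by
    intro x hx
    have e1 : x ^ q ^ (t - 1) = x ^ q ^ (d - 1) := by
      have he : (t - d) + (d - 1) = t - 1 := by omega
      rw [← he, pow_add, pow_mul, hSdvd x hx _ (Nat.dvd_sub hdt dvd_rfl)]
    have e2 : x ^ q ^ (t + 1) = x ^ q ^ 1 := by
      rw [pow_add, pow_mul, hSdvd x hx t hdt]
    have e3 : x ^ q ^ (2 * t - 1) = x ^ q ^ (d - 1) := by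
      have he : (2 * t - d) + (d - 1) = 2 * t - 1 := by omega
      rw [← he, pow_add, pow_mul, hSdvd x hx _ (Nat.dvd_sub hd2t dvd_rfl)]
    rw [hψ x, e1, e2, e3]
    field_simp
    ring
  have hiter : ∀ (j : ℕ) (x : F), x ^ q ^ d = x → ψ^[j] x = x ^ q ^ (j * (d - 1)) := by
    intro j
    induction j with
    | zero => intro x hx; simp
    | succ n ih =>
      intro x hx
      rw [Function.iterate_succ_apply', ih x hx, hψS _ (hmemS x _ hx), ← pow_mul, ← pow_add,
        Nat.succ_mul]
  have hψk : ∀ x : F, x ^ q ^ d = x → ψ^[k] x = x := by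
    intro x hx
    rw [hiter k x hx]
    exact hSdvd x hx _ (hdk.mul_right (d - 1))
  -- find z with z^(q^d) = z but z^q ≠ z
  obtain ⟨g, hg⟩ := IsCyclic.exists_generator (α := Fˣ)
  have hgord : orderOf g = q ^ (2 * t) - 1 := by
    rw [orderOf_eq_card_of_forall_mem_zpowers hg, Nat.card_units,
      Nat.card_eq_fintype_card, hF]
  set N := q ^ (2 * t) - 1 with hN
  set M := q ^ d - 1 with hM
  have hNpos : 0 < N := by
    have h1 : q ^ 1 ≤ q ^ (2 * t) := Nat.pow_le_pow_right (by omega) (by omega)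
    rw [pow_one] at h1
    omega
  have hMltq : q - 1 < M := by
    have h1 : q ^ 1 < q ^ d := Nat.pow_lt_pow_right (by omega) (by omega)
    rw [pow_one] at h1
    omega
  have hMdvdN : M ∣ N := by
    have he : (q ^ d) ^ (2 * t / d) = q ^ (2 * t) := by
      rw [← pow_mul, Nat.mul_div_cancel' hd2t]
    have := Nat.sub_dvd_pow_sub_pow (q ^ d) 1 (2 * t / d)
    rwa [one_pow, he] at this
  set z := g ^ (N / M) with hz
  have hzord : orderOf z = M := by
    rw [hz, orderOf_pow, hgord, Nat.gcd_eq_right (Nat.div_dvd_of_dvd hMdvdN),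
      Nat.div_div_self hMdvdN (by omega)]
  have hzM : z ^ M = 1 := by rw [← hzord]; exact pow_orderOf_eq_one z
  set w : F := (z : F) with hw
  have hw0 : w ≠ 0 := Units.ne_zero z
  have hwM : w ^ M = 1 := by
    rw [hw, ← Units.val_pow_eq_pow_val, hzM, Units.val_one]
  have hwS : w ^ q ^ d = w := by
    have he : q ^ d = M + 1 := by
      have h1 : 1 ≤ q ^ d := Nat.one_le_pow _ _ (by omega)
      omega
    rw [he, pow_succ, hwM, one_mul]
  have hwq : w ^ q ≠ w := by
    intro h
    have hq1 : w ^ (q - 1) * w = 1 * w := by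
      rw [one_mul, ← pow_succ]
      have : q - 1 + 1 = q := by omega
      rw [this, h]
    have hw1 : w ^ (q - 1) = 1 := mul_right_cancel₀ hw0 hq1
    have hzq1 : z ^ (q - 1) = 1 := by
      apply Units.ext
      rw [Units.val_pow_eq_pow_val, Units.val_one]
      exact hw1
    have := Nat.le_of_dvd (by omega) (hzord ▸ orderOf_dvd_of_pow_eq_one hzq1)
    omega
  -- conclude
  intro H
  obtain ⟨c, hcq, hzc⟩ := H 1 w one_ne_zero hw0 (by
    rw [hψk 1 (by simp), hψk w hwS, div_self hw0, div_one])
  rw [mul_one] at hzc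
  exact hwq (by rw [hzc, hcq])
end

section
/- Let q be an odd prime power, n = 8, and for k ∈ {1, 3} consider ψ₈^{(k)} on F_{q^8}. Then the F_q-subspace U = {(x, ψ₈^{(k)}(x)) : x ∈ F_{q^8}} is not GL(2, q^8)-equivalent to U' = {(x, δx^{q^s} + x^{q^{s+4}}) : x ∈ F_{q^8}} for any s with gcd(s, 4) = 1 and any δ ∈ F_{q^8} with N_{q^8/q^4}(δ) ∉ {0, 1}. -/
open Polynomial in
private lemma indep8 {q : ℕ} (hq1 : 1 < q) {F : Type} [Field F] [Fintype F]
    (hF : Fintype.card F = q ^ 8) (e0 e1 e2 e3 e4 e5 e6 e7 : F)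
    (h : ∀ x : F, e0 * x ^ q ^ 0 + e1 * x ^ q ^ 1 + e2 * x ^ q ^ 2 + e3 * x ^ q ^ 3
      + e4 * x ^ q ^ 4 + e5 * x ^ q ^ 5 + e6 * x ^ q ^ 6 + e7 * x ^ q ^ 7 = 0) :
    e0 = 0 ∧ e1 = 0 ∧ e2 = 0 ∧ e3 = 0 ∧ e4 = 0 ∧ e5 = 0 ∧ e6 = 0 ∧ e7 = 0 := by
  have hiff : ∀ i j : ℕ, q ^ i = q ^ j ↔ i = j := fun i j =>
    ⟨fun hh => Nat.pow_right_injective hq1 hh, fun hh => by rw [hh]⟩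
  set P : F[X] := C e0 * X ^ q ^ 0 + C e1 * X ^ q ^ 1 + C e2 * X ^ q ^ 2 + C e3 * X ^ q ^ 3
      + C e4 * X ^ q ^ 4 + C e5 * X ^ q ^ 5 + C e6 * X ^ q ^ 6 + C e7 * X ^ q ^ 7 with hP
  have hP0 : P = 0 := by
    apply Polynomial.eq_zero_of_natDegree_lt_card_of_eval_eq_zero' P Finset.univ
    · intro i _
      simp only [hP, eval_add, eval_mul, eval_C, eval_pow, eval_X]
      linear_combination h i
    · rw [Finset.card_univ, hF]
      have hb : ∀ u v : F[X], u.natDegree ≤ q ^ 7 → v.natDegree ≤ q ^ 7 →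
          (u + v).natDegree ≤ q ^ 7 := fun u v hu hv =>
        le_trans (natDegree_add_le u v) (max_le hu hv)
      have ht : ∀ (a : F) (i : ℕ), i ≤ 7 → (C a * X ^ q ^ i).natDegree ≤ q ^ 7 :=
        fun a i hi => le_trans (natDegree_C_mul_X_pow_le a (q ^ i))
          (Nat.pow_le_pow_right (le_of_lt hq1) hi)
      have hd : P.natDegree ≤ q ^ 7 := by
        rw [hP]
        exact hb _ _ (hb _ _ (hb _ _ (hb _ _ (hb _ _ (hb _ _ (hb _ _
          (ht _ _ (by norm_num)) (ht _ _ (by norm_num))) (ht _ _ (by norm_num)))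
          (ht _ _ (by norm_num))) (ht _ _ (by norm_num))) (ht _ _ (by norm_num)))
          (ht _ _ (by norm_num))) (ht _ _ (by norm_num))
      exact lt_of_le_of_lt hd (Nat.pow_lt_pow_right hq1 (by norm_num))
  refine ⟨?_, ?_, ?_, ?_, ?_, ?_, ?_, ?_⟩
  · have := congrArg (fun pp : F[X] => pp.coeff (q ^ 0)) hP0
    simp only [hP, coeff_add, coeff_C_mul, coeff_X_pow, coeff_zero, hiff] at this
    norm_num at this
    exact this
  · have := congrArg (fun pp : F[X] => pp.coeff (q ^ 1)) hP0
    simp only [hP, coeff_add, coeff_C_mul, coeff_X_pow, coeff_zero, hiff] at this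
    norm_num at this
    exact this
  · have := congrArg (fun pp : F[X] => pp.coeff (q ^ 2)) hP0
    simp only [hP, coeff_add, coeff_C_mul, coeff_X_pow, coeff_zero, hiff] at this
    norm_num at this
    exact this
  · have := congrArg (fun pp : F[X] => pp.coeff (q ^ 3)) hP0
    simp only [hP, coeff_add, coeff_C_mul, coeff_X_pow, coeff_zero, hiff] at this
    norm_num at this
    exact this
  · have := congrArg (fun pp : F[X] => pp.coeff (q ^ 4)) hP0
    simp only [hP, coeff_add, coeff_C_mul, coeff_X_pow, coeff_zero, hiff] at this
    norm_num at this
    exact this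
  · have := congrArg (fun pp : F[X] => pp.coeff (q ^ 5)) hP0
    simp only [hP, coeff_add, coeff_C_mul, coeff_X_pow, coeff_zero, hiff] at this
    norm_num at this
    exact this
  · have := congrArg (fun pp : F[X] => pp.coeff (q ^ 6)) hP0
    simp only [hP, coeff_add, coeff_C_mul, coeff_X_pow, coeff_zero, hiff] at this
    norm_num at this
    exact this
  · have := congrArg (fun pp : F[X] => pp.coeff (q ^ 7)) hP0
    simp only [hP, coeff_add, coeff_C_mul, coeff_X_pow, coeff_zero, hiff] at this
    norm_num at this
    exact this

theorem stmt_15 (p r q k : ℕ) (hp : p.Prime) (hpodd : Odd p) (hr : 0 < r)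
    (hq : q = p ^ r) (hk : k = 1 ∨ k = 3)
    (F : Type) [Field F] [Fintype F] (hF : Fintype.card F = q ^ 8)
    (ψk : F → F)
    (hψk : ∀ x : F, ψk x = (x ^ q ^ k + x ^ q ^ ((4 - k) % 8)
      - x ^ q ^ ((4 + k) % 8) + x ^ q ^ (8 - k)) / 2) :
    ∀ (s : ℕ) (δ : F), Nat.gcd s 4 = 1 →
      δ ^ (q ^ 4 + 1) ≠ 0 → δ ^ (q ^ 4 + 1) ≠ 1 →
      ∀ a b c d : F, a * d - b * c ≠ 0 →
        (fun v : F × F => (a * v.1 + b * v.2, c * v.1 + d * v.2)) ''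
            {v : F × F | ∃ x : F, v = (x, ψk x)}
          ≠ {v : F × F | ∃ x : F, v = (x, δ * x ^ q ^ s + x ^ q ^ ((s + 4) % 8))} := by
  intro s δ hgcd hδ0 hδ1 a b c d hdet heq
  have hq1 : 1 < q := by
    subst hq
    exact Nat.one_lt_pow (by omega) hp.one_lt
  have hsodd : s % 8 = 1 ∨ s % 8 = 3 ∨ s % 8 = 5 ∨ s % 8 = 7 := by
    have h2s : ¬ (2 ∣ s) := by
      intro h2s
      have hdd := Nat.dvd_gcd h2s (by norm_num : (2:ℕ) ∣ 4)
      rw [hgcd] at hdd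
      omega
    omega
  haveI hfact : Fact p.Prime := ⟨hp⟩
  haveI hchar : CharP F p := by
    have hc : CharP F (ringChar F) := ringChar.charP F
    have hprime : (ringChar F).Prime := CharP.char_is_prime F (ringChar F)
    obtain ⟨n, _, hn⟩ := FiniteField.card F (ringChar F)
    have h1 : p ∣ ringChar F ^ (n : ℕ) := by
      rw [← hn, hF, hq]
      exact dvd_pow (dvd_pow_self p (by omega)) (by norm_num)
    have : p = ringChar F := (Nat.prime_dvd_prime_iff_eq hp hprime).mp (hp.dvd_of_dvd_pow h1)
    rw [this]
    exact hc
  have h2 : (2 : F) ≠ 0 := by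
    intro h20
    have hdvd : p ∣ 2 := (CharP.cast_eq_zero_iff F p 2).mp (by exact_mod_cast h20)
    have := Nat.le_of_dvd (by norm_num) hdvd
    have := hp.two_le
    rcases hpodd with ⟨j, hj⟩
    omega
  have frobA : ∀ (u v : F) (m : ℕ), (u + v) ^ q ^ m = u ^ q ^ m + v ^ q ^ m := by
    intro u v m
    rw [hq, ← pow_mul]
    exact add_pow_char_pow u v p (r * m)
  have frobS : ∀ (u v : F) (m : ℕ), (u - v) ^ q ^ m = u ^ q ^ m - v ^ q ^ m := by
    intro u v m
    rw [hq, ← pow_mul]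
    exact sub_pow_char_pow u v (r * m)
  have frob2 : ∀ m : ℕ, (2 : F) ^ q ^ m = 2 := by
    intro m
    have := frobA 1 1 m
    norm_num at this
    exact this
  have red : ∀ (x : F) (m : ℕ), x ^ q ^ m = x ^ q ^ (m % 8) := by
    intro x m
    have base : ∀ y : F, y ^ q ^ 8 = y := fun y => by
      rw [← hF]; exact FiniteField.pow_card y
    have keyp : ∀ (n : ℕ) (y : F), y ^ (q ^ 8) ^ n = y := by
      intro n
      induction n with
      | zero => intro y; simp
      | succ n ih => intro y; rw [pow_succ, pow_mul, ih, base]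
    have hqm : q ^ m = (q ^ 8) ^ (m / 8) * q ^ (m % 8) := by
      rw [← pow_mul, ← pow_add]
      congr 1
      omega
    rw [hqm, pow_mul, keyp]
  have comp : ∀ (x : F) (i j : ℕ), (x ^ q ^ i) ^ q ^ j = x ^ q ^ (i + j) := fun x i j => by
    rw [← pow_mul, ← pow_add]
  have H : ∀ x : F, c * x + d * ψk x
      = δ * (a * x + b * ψk x) ^ q ^ s + (a * x + b * ψk x) ^ q ^ ((s + 4) % 8) := by
    intro x
    have hmem : (a * x + b * ψk x, c * x + d * ψk x)
        ∈ {v : F × F | ∃ y : F, v = (y, δ * y ^ q ^ s + y ^ q ^ ((s + 4) % 8))} := by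
      rw [← heq]
      exact ⟨(x, ψk x), ⟨x, rfl⟩, rfl⟩
    obtain ⟨y, hy⟩ := hmem
    have hy1 : a * x + b * ψk x = y := congrArg Prod.fst hy
    have hy2 : c * x + d * ψk x = δ * y ^ q ^ s + y ^ q ^ ((s + 4) % 8) :=
      congrArg Prod.snd hy
    rw [← hy1] at hy2
    exact hy2
  rcases hk with rfl | rfl
  · -- k = 1
    have hψ2 : ∀ x : F, 2 * ψk x = x ^ q ^ 1 + x ^ q ^ 3 - x ^ q ^ 5 + x ^ q ^ 7 := by
      intro x
      rw [hψk x]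
      norm_num
      rw [mul_comm]
      exact div_mul_cancel₀ _ h2
    have key : ∀ (m : ℕ) (x : F), 2 * (a * x + b * ψk x) ^ q ^ m
        = 2 * a ^ q ^ m * x ^ q ^ m + b ^ q ^ m *
          (x ^ q ^ (1 + m) + x ^ q ^ (3 + m) - x ^ q ^ (5 + m) + x ^ q ^ (7 + m)) := by
      intro m x
      have h1 : (2 : F) * (a * x + b * ψk x) ^ q ^ m
          = ((2 * a) * x + b * (2 * ψk x)) ^ q ^ m := by
        rw [show (2 * a) * x + b * (2 * ψk x) = 2 * (a * x + b * ψk x) from by ring,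
          mul_pow, frob2]
      rw [h1, hψ2 x, frobA, mul_pow, mul_pow, mul_pow, frob2, frobA, frobS, frobA,
        comp, comp, comp, comp]
    rcases hsodd with ht | ht | ht | ht
    · -- k = 1, t = 1
      have ht4 : (s + 4) % 8 = 5 := by omega
      have ka := key 1
      have kb := key 5
      norm_num at ka kb
      obtain ⟨g0, g1, g2, g3, g4, g5, g6, g7⟩ := indep8 hq1 hF
        (2 * c - δ * b^ q ^ 1 - b^ q ^ 5)
        (d - 2 * δ * a^ q ^ 1)
        (-(δ * b^ q ^ 1) + b^ q ^ 5)
        (d)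
        (-(δ * b^ q ^ 1) - b^ q ^ 5)
        (-d - 2 * a^ q ^ 5)
        (δ * b^ q ^ 1 - b^ q ^ 5)
        (d)
        (fun x => by
          have h := H x
          rw [red (a * x + b * ψk x) s, ht, ht4] at h
          have kax := ka x
          have kbx := kb x
          have r8 := red x 8
          have r10 := red x 10
          have r12 := red x 12
          have r14 := red x 14
          norm_num at r8 r10 r12 r14
          simp only [r8, r10, r12, r14] at kax kbx
          linear_combination 2 * h - d * (hψ2 x) + δ * kax + kbx)
      have hd0 : d = 0 := g3
      have hc0 : c = 0 := by
        have h2c : 2 * c = 0 := by linear_combination g0 - g4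
        rcases mul_eq_zero.mp h2c with hh | hh
        · exact absurd hh h2
        · exact hh
      exact hdet (by rw [hd0, hc0]; ring)
    · -- k = 1, t = 3
      have ht4 : (s + 4) % 8 = 7 := by omega
      have ka := key 3
      have kb := key 7
      norm_num at ka kb
      obtain ⟨g0, g1, g2, g3, g4, g5, g6, g7⟩ := indep8 hq1 hF
        (2 * c + δ * b^ q ^ 3 - b^ q ^ 7)
        (d)
        (-(δ * b^ q ^ 3) - b^ q ^ 7)
        (d - 2 * δ * a^ q ^ 3)
        (-(δ * b^ q ^ 3) + b^ q ^ 7)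
        (-d)
        (-(δ * b^ q ^ 3) - b^ q ^ 7)
        (d - 2 * a^ q ^ 7)
        (fun x => by
          have h := H x
          rw [red (a * x + b * ψk x) s, ht, ht4] at h
          have kax := ka x
          have kbx := kb x
          have r8 := red x 8
          have r10 := red x 10
          have r12 := red x 12
          have r14 := red x 14
          norm_num at r8 r10 r12 r14
          simp only [r8, r10, r12, r14] at kax kbx
          linear_combination 2 * h - d * (hψ2 x) + δ * kax + kbx)
      have hd0 : d = 0 := g1
      have hc0 : c = 0 := by
        have h2c : 2 * c = 0 := by linear_combination g0 + g4
        rcases mul_eq_zero.mp h2c with hh | hh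
        · exact absurd hh h2
        · exact hh
      exact hdet (by rw [hd0, hc0]; ring)
    · -- k = 1, t = 5
      have ht4 : (s + 4) % 8 = 1 := by omega
      have ka := key 5
      have kb := key 1
      norm_num at ka kb
      obtain ⟨g0, g1, g2, g3, g4, g5, g6, g7⟩ := indep8 hq1 hF
        (2 * c - δ * b^ q ^ 5 - b^ q ^ 1)
        (d - 2 * a^ q ^ 1)
        (δ * b^ q ^ 5 - b^ q ^ 1)
        (d)
        (-(δ * b^ q ^ 5) - b^ q ^ 1)
        (-d - 2 * δ * a^ q ^ 5)
        (-(δ * b^ q ^ 5) + b^ q ^ 1)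
        (d)
        (fun x => by
          have h := H x
          rw [red (a * x + b * ψk x) s, ht, ht4] at h
          have kax := ka x
          have kbx := kb x
          have r8 := red x 8
          have r10 := red x 10
          have r12 := red x 12
          have r14 := red x 14
          norm_num at r8 r10 r12 r14
          simp only [r8, r10, r12, r14] at kax kbx
          linear_combination 2 * h - d * (hψ2 x) + δ * kax + kbx)
      have hd0 : d = 0 := g3
      have hc0 : c = 0 := by
        have h2c : 2 * c = 0 := by linear_combination g0 - g4
        rcases mul_eq_zero.mp h2c with hh | hh
        · exact absurd hh h2
        · exact hh
      exact hdet (by rw [hd0, hc0]; ring)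
    · -- k = 1, t = 7
      have ht4 : (s + 4) % 8 = 3 := by omega
      have ka := key 7
      have kb := key 3
      norm_num at ka kb
      obtain ⟨g0, g1, g2, g3, g4, g5, g6, g7⟩ := indep8 hq1 hF
        (2 * c - δ * b^ q ^ 7 + b^ q ^ 3)
        (d)
        (-(δ * b^ q ^ 7) - b^ q ^ 3)
        (d - 2 * a^ q ^ 3)
        (δ * b^ q ^ 7 - b^ q ^ 3)
        (-d)
        (-(δ * b^ q ^ 7) - b^ q ^ 3)
        (d - 2 * δ * a^ q ^ 7)
        (fun x => by
          have h := H x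
          rw [red (a * x + b * ψk x) s, ht, ht4] at h
          have kax := ka x
          have kbx := kb x
          have r8 := red x 8
          have r10 := red x 10
          have r12 := red x 12
          have r14 := red x 14
          norm_num at r8 r10 r12 r14
          simp only [r8, r10, r12, r14] at kax kbx
          linear_combination 2 * h - d * (hψ2 x) + δ * kax + kbx)
      have hd0 : d = 0 := g1
      have hc0 : c = 0 := by
        have h2c : 2 * c = 0 := by linear_combination g0 + g4
        rcases mul_eq_zero.mp h2c with hh | hh
        · exact absurd hh h2
        · exact hh
      exact hdet (by rw [hd0, hc0]; ring)
  · -- k = 3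
    have hψ2 : ∀ x : F, 2 * ψk x = x ^ q ^ 3 + x ^ q ^ 1 - x ^ q ^ 7 + x ^ q ^ 5 := by
      intro x
      rw [hψk x]
      norm_num
      rw [mul_comm]
      exact div_mul_cancel₀ _ h2
    have key : ∀ (m : ℕ) (x : F), 2 * (a * x + b * ψk x) ^ q ^ m
        = 2 * a ^ q ^ m * x ^ q ^ m + b ^ q ^ m *
          (x ^ q ^ (3 + m) + x ^ q ^ (1 + m) - x ^ q ^ (7 + m) + x ^ q ^ (5 + m)) := by
      intro m x
      have h1 : (2 : F) * (a * x + b * ψk x) ^ q ^ m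
          = ((2 * a) * x + b * (2 * ψk x)) ^ q ^ m := by
        rw [show (2 * a) * x + b * (2 * ψk x) = 2 * (a * x + b * ψk x) from by ring,
          mul_pow, frob2]
      rw [h1, hψ2 x, frobA, mul_pow, mul_pow, mul_pow, frob2, frobA, frobS, frobA,
        comp, comp, comp, comp]
    rcases hsodd with ht | ht | ht | ht
    · -- k = 3, t = 1
      have ht4 : (s + 4) % 8 = 5 := by omega
      have ka := key 1
      have kb := key 5
      norm_num at ka kb
      obtain ⟨g0, g1, g2, g3, g4, g5, g6, g7⟩ := indep8 hq1 hF
        (2 * c + δ * b^ q ^ 1 - b^ q ^ 5)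
        (d - 2 * δ * a^ q ^ 1)
        (-(δ * b^ q ^ 1) - b^ q ^ 5)
        (d)
        (-(δ * b^ q ^ 1) + b^ q ^ 5)
        (d - 2 * a^ q ^ 5)
        (-(δ * b^ q ^ 1) - b^ q ^ 5)
        (-d)
        (fun x => by
          have h := H x
          rw [red (a * x + b * ψk x) s, ht, ht4] at h
          have kax := ka x
          have kbx := kb x
          have r8 := red x 8
          have r10 := red x 10
          have r12 := red x 12
          have r14 := red x 14
          norm_num at r8 r10 r12 r14
          simp only [r8, r10, r12, r14] at kax kbx
          linear_combination 2 * h - d * (hψ2 x) + δ * kax + kbx)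
      have hd0 : d = 0 := g3
      have hc0 : c = 0 := by
        have h2c : 2 * c = 0 := by linear_combination g0 + g4
        rcases mul_eq_zero.mp h2c with hh | hh
        · exact absurd hh h2
        · exact hh
      exact hdet (by rw [hd0, hc0]; ring)
    · -- k = 3, t = 3
      have ht4 : (s + 4) % 8 = 7 := by omega
      have ka := key 3
      have kb := key 7
      norm_num at ka kb
      obtain ⟨g0, g1, g2, g3, g4, g5, g6, g7⟩ := indep8 hq1 hF
        (2 * c - δ * b^ q ^ 3 - b^ q ^ 7)
        (d)
        (δ * b^ q ^ 3 - b^ q ^ 7)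
        (d - 2 * δ * a^ q ^ 3)
        (-(δ * b^ q ^ 3) - b^ q ^ 7)
        (d)
        (-(δ * b^ q ^ 3) + b^ q ^ 7)
        (-d - 2 * a^ q ^ 7)
        (fun x => by
          have h := H x
          rw [red (a * x + b * ψk x) s, ht, ht4] at h
          have kax := ka x
          have kbx := kb x
          have r8 := red x 8
          have r10 := red x 10
          have r12 := red x 12
          have r14 := red x 14
          norm_num at r8 r10 r12 r14
          simp only [r8, r10, r12, r14] at kax kbx
          linear_combination 2 * h - d * (hψ2 x) + δ * kax + kbx)
      have hd0 : d = 0 := g1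
      have hc0 : c = 0 := by
        have h2c : 2 * c = 0 := by linear_combination g0 - g4
        rcases mul_eq_zero.mp h2c with hh | hh
        · exact absurd hh h2
        · exact hh
      exact hdet (by rw [hd0, hc0]; ring)
    · -- k = 3, t = 5
      have ht4 : (s + 4) % 8 = 1 := by omega
      have ka := key 5
      have kb := key 1
      norm_num at ka kb
      obtain ⟨g0, g1, g2, g3, g4, g5, g6, g7⟩ := indep8 hq1 hF
        (2 * c - δ * b^ q ^ 5 + b^ q ^ 1)
        (d - 2 * a^ q ^ 1)
        (-(δ * b^ q ^ 5) - b^ q ^ 1)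
        (d)
        (δ * b^ q ^ 5 - b^ q ^ 1)
        (d - 2 * δ * a^ q ^ 5)
        (-(δ * b^ q ^ 5) - b^ q ^ 1)
        (-d)
        (fun x => by
          have h := H x
          rw [red (a * x + b * ψk x) s, ht, ht4] at h
          have kax := ka x
          have kbx := kb x
          have r8 := red x 8
          have r10 := red x 10
          have r12 := red x 12
          have r14 := red x 14
          norm_num at r8 r10 r12 r14
          simp only [r8, r10, r12, r14] at kax kbx
          linear_combination 2 * h - d * (hψ2 x) + δ * kax + kbx)
      have hd0 : d = 0 := g3
      have hc0 : c = 0 := by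
        have h2c : 2 * c = 0 := by linear_combination g0 + g4
        rcases mul_eq_zero.mp h2c with hh | hh
        · exact absurd hh h2
        · exact hh
      exact hdet (by rw [hd0, hc0]; ring)
    · -- k = 3, t = 7
      have ht4 : (s + 4) % 8 = 3 := by omega
      have ka := key 7
      have kb := key 3
      norm_num at ka kb
      obtain ⟨g0, g1, g2, g3, g4, g5, g6, g7⟩ := indep8 hq1 hF
        (2 * c - δ * b^ q ^ 7 - b^ q ^ 3)
        (d)
        (-(δ * b^ q ^ 7) + b^ q ^ 3)
        (d - 2 * a^ q ^ 3)
        (-(δ * b^ q ^ 7) - b^ q ^ 3)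
        (d)
        (δ * b^ q ^ 7 - b^ q ^ 3)
        (-d - 2 * δ * a^ q ^ 7)
        (fun x => by
          have h := H x
          rw [red (a * x + b * ψk x) s, ht, ht4] at h
          have kax := ka x
          have kbx := kb x
          have r8 := red x 8
          have r10 := red x 10
          have r12 := red x 12
          have r14 := red x 14
          norm_num at r8 r10 r12 r14
          simp only [r8, r10, r12, r14] at kax kbx
          linear_combination 2 * h - d * (hψ2 x) + δ * kax + kbx)
      have hd0 : d = 0 := g1
      have hc0 : c = 0 := by
        have h2c : 2 * c = 0 := by linear_combination g0 - g4
        rcases mul_eq_zero.mp h2c with hh | hh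
        · exact absurd hh h2
        · exact hh
      exact hdet (by rw [hd0, hc0]; ring)
end

section
/- Let q be an odd prime power, n = 2t with t ≥ 3, 1 ≤ k < t with gcd(k, 2t) = 1, and suppose ψ^{(k)} is scattered. Let W = {x ∈ F_{q^n} : x + x^{q^t} = 0}. If x ∈ F_{q^n} satisfies ψ^{(k)}(x)/x ∈ F_{q^t} and x ≠ 0, then x ∈ F_{q^t} or x ∈ W. -/
theorem stmt_16 (p r q t k : ℕ) (hp : p.Prime) (hpodd : Odd p) (hr : 0 < r)
    (hq : q = p ^ r) (ht : 3 ≤ t) (hk1 : 1 ≤ k) (hk2 : k < t)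
    (hgcd : Nat.gcd k (2 * t) = 1)
    (F : Type) [Field F] [Fintype F] (hF : Fintype.card F = q ^ (2 * t))
    (ψk : F → F)
    (hψk : ∀ x : F, ψk x = (x ^ q ^ k + x ^ q ^ (t - k)
      - x ^ q ^ (t + k) + x ^ q ^ (2 * t - k)) / 2)
    (hscat : ∀ y z : F, y ≠ 0 → z ≠ 0 → ψk y / y = ψk z / z →
      ∃ c : F, c ^ q = c ∧ z = c * y) :
    ∀ x : F, x ≠ 0 → (ψk x / x) ^ q ^ t = ψk x / x →
      x ^ q ^ t = x ∨ x ^ q ^ t = -x := by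
  intro x hx hfix
  haveI : Fact p.Prime := ⟨hp⟩
  -- characteristic of F is p
  haveI hchar : CharP F p := by
    have h0 : ((Fintype.card F : ℕ) : F) = 0 := FiniteField.cast_card_eq_zero F
    have hdvd : ringChar F ∣ q ^ (2 * t) := by
      rw [← hF]
      exact (ringChar.spec F (Fintype.card F)).mp h0
    have hcp : (ringChar F).Prime := CharP.char_is_prime F (ringChar F)
    have : ringChar F ∣ p := by
      rw [hq, ← pow_mul] at hdvd
      exact hcp.dvd_of_dvd_pow hdvd
    have : ringChar F = p := ((Nat.prime_dvd_prime_iff_eq hcp hp).mp this)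
    rw [← this]
    exact ringChar.charP F
  set m := r * t with hm
  have hqt : q ^ t = p ^ m := by rw [hq, ← pow_mul]
  set φ : F →+* F := (iterateFrobenius F p m : F →+* F) with hφdef
  have hφ : ∀ a : F, φ a = a ^ q ^ t := fun a => by
    rw [hφdef, hqt]; rfl
  have hpow2t : ∀ a : F, a ^ q ^ (2 * t) = a := fun a => by
    rw [← hF]; exact FiniteField.pow_card a
  have hy : x ^ q ^ t ≠ 0 := pow_ne_zero _ hx
  have key : ψk x / x = ψk (x ^ q ^ t) / (x ^ q ^ t) := by
    have h1 : ψk (x ^ q ^ t) = φ (ψk x) := by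
      rw [hψk, hψk, map_div₀, map_add, map_sub, map_add, map_ofNat,
        hφ, hφ, hφ, hφ, pow_right_comm x (q ^ t) (q ^ k),
        pow_right_comm x (q ^ t) (q ^ (t - k)),
        pow_right_comm x (q ^ t) (q ^ (t + k)),
        pow_right_comm x (q ^ t) (q ^ (2 * t - k))]
    rw [h1, ← hφ x, ← map_div₀, hφ, hfix]
  obtain ⟨c, hc, hxc⟩ := hscat x (x ^ q ^ t) hx hy key
  have hcq : ∀ s : ℕ, c ^ q ^ s = c := by
    intro s
    induction s with
    | zero => simp
    | succ n ih => rw [pow_succ, pow_mul, ih, hc]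
  have h2 : x = c ^ 2 * x :=
    calc x = x ^ q ^ (2 * t) := (hpow2t x).symm
      _ = (x ^ q ^ t) ^ q ^ t := by rw [← pow_mul, ← pow_add, two_mul]
      _ = (c * x) ^ q ^ t := by rw [← hxc]
      _ = c ^ q ^ t * x ^ q ^ t := mul_pow c x (q ^ t)
      _ = c * (c * x) := by rw [hcq t, hxc]
      _ = c ^ 2 * x := by ring
  have hc2 : c * c = 1 := by
    have h3 : c ^ 2 * x = 1 * x := by rw [← h2, one_mul]
    have := mul_right_cancel₀ hx h3
    rwa [sq] at this
  rcases mul_self_eq_one_iff.mp hc2 with h | h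
  · left; rw [hxc, h, one_mul]
  · right; rw [hxc, h, neg_one_mul]
end

section
/- Let q be an odd prime power, n = 2t with t ≥ 3, and W = {x ∈ F_{q^n} : x + x^{q^t} = 0}. For any 1 ≤ k < 2t with gcd(k, t) = 1: ψ^{(k)}(x) = x^{q^{k(t-1) mod 2t}} for all x ∈ F_{q^t}, and ψ^{(k)}(x) = x^{q^k} for all x ∈ W. -/
theorem stmt_17 (p r q t k : ℕ) (hp : p.Prime) (hpodd : Odd p) (hr : 0 < r)
    (hq : q = p ^ r) (ht : 3 ≤ t) (hk1 : 1 ≤ k) (hk2 : k < 2 * t)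
    (hgcd : Nat.gcd k t = 1)
    (F : Type) [Field F] [Fintype F] (hF : Fintype.card F = q ^ (2 * t))
    (ψ : F → F)
    (hψ : ∀ x : F, ψ x = (x ^ q ^ 1 + x ^ q ^ (t - 1) - x ^ q ^ (t + 1) + x ^ q ^ (2 * t - 1)) / 2) :
    (∀ x : F, x ^ q ^ t = x → ψ^[k] x = x ^ q ^ ((k * (t - 1)) % (2 * t))) ∧
    (∀ x : F, x ^ q ^ t = -x → ψ^[k] x = x ^ q ^ k) := by
  have hqodd : Odd q := hq ▸ hpodd.pow
  -- 2 ≠ 0 in F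
  have h2 : (2 : F) ≠ 0 := by
    intro h20
    have hc0 : ((q ^ (2 * t) : ℕ) : F) = 0 := by
      rw [← hF]; exact FiniteField.cast_card_eq_zero F
    have hq0 : ((q : ℕ) : F) = 0 := by
      have := hc0
      push_cast at this
      exact pow_eq_zero_iff (by omega) |>.mp this
    have hp0 : ((p : ℕ) : F) = 0 := by
      rw [hq] at hq0
      push_cast at hq0
      exact pow_eq_zero_iff (by omega) |>.mp hq0
    have hd1 : ringChar F ∣ p := ringChar.dvd hp0
    have hd2 : ringChar F ∣ 2 := ringChar.dvd (by exact_mod_cast h20)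
    have hd : ringChar F ∣ Nat.gcd p 2 := Nat.dvd_gcd hd1 hd2
    have hg : Nat.gcd p 2 = 1 := by
      have hnd : ¬ (2 ∣ p) := by
        intro h; rcases hpodd with ⟨m, hm⟩; rcases h with ⟨c, hc⟩; omega
      rcases (Nat.dvd_prime Nat.prime_two).mp (Nat.gcd_dvd_right p 2) with h | h
      · exact h
      · exact absurd (h ▸ Nat.gcd_dvd_left p 2) hnd
    rw [hg, Nat.dvd_one] at hd
    exact CharP.ringChar_ne_one hd
  -- basic exponent tools
  have hcomp : ∀ (x : F) (a b : ℕ), (x ^ q ^ a) ^ q ^ b = x ^ q ^ (a + b) := by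
    intro x a b; rw [← pow_mul, ← pow_add]
  have hsplit : ∀ (x : F) (a b : ℕ), x ^ q ^ (a + b) = (x ^ q ^ a) ^ q ^ b := by
    intro x a b; rw [hcomp]
  -- reduction mod 2t for fixed elements
  have hred : ∀ x : F, x ^ q ^ t = x → ∀ a : ℕ, x ^ q ^ a = x ^ q ^ (a % (2 * t)) := by
    intro x hx a
    have h2t : x ^ q ^ (2 * t) = x := by
      rw [two_mul, hsplit, hx, hx]
    have hm : ∀ m : ℕ, x ^ q ^ (2 * t * m) = x := by
      intro m
      induction m with
      | zero => simp
      | succ m ih =>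
        have : 2 * t * (m + 1) = 2 * t * m + 2 * t := by ring
        rw [this, hsplit, ih, h2t]
    calc x ^ q ^ a = x ^ q ^ (2 * t * (a / (2 * t)) + a % (2 * t)) := by
          rw [Nat.div_add_mod]
      _ = (x ^ q ^ (2 * t * (a / (2 * t)))) ^ q ^ (a % (2 * t)) := hsplit _ _ _
      _ = x ^ q ^ (a % (2 * t)) := by rw [hm]
  -- ψ on fixed field
  have hfix : ∀ x : F, x ^ q ^ t = x → ψ x = x ^ q ^ (t - 1) ∧ (ψ x) ^ q ^ t = ψ x := by
    intro x hx
    have e1 : x ^ q ^ (t + 1) = x ^ q ^ 1 := by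
      rw [hsplit, hx]
    have e2 : x ^ q ^ (2 * t - 1) = x ^ q ^ (t - 1) := by
      have h : 2 * t - 1 = t + (t - 1) := by omega
      rw [h, hsplit, hx]
    have hpsi : ψ x = x ^ q ^ (t - 1) := by
      rw [hψ, e1, e2]
      field_simp
      ring
    refine ⟨hpsi, ?_⟩
    rw [hpsi, hcomp]
    have h : t - 1 + t = t + (t - 1) := by omega
    rw [h, hsplit, hx]
  -- ψ on W
  have hWs : ∀ x : F, x ^ q ^ t = -x → ψ x = x ^ q ^ 1 ∧ (ψ x) ^ q ^ t = -(ψ x) := by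
    intro x hx
    have hqo : ∀ m : ℕ, Odd (q ^ m) := fun m => hqodd.pow
    have e1 : x ^ q ^ (t + 1) = -(x ^ q ^ 1) := by
      rw [hsplit, hx, (hqo 1).neg_pow]
    have e2 : x ^ q ^ (2 * t - 1) = -(x ^ q ^ (t - 1)) := by
      have h : 2 * t - 1 = t + (t - 1) := by omega
      rw [h, hsplit, hx, (hqo (t - 1)).neg_pow]
    have hpsi : ψ x = x ^ q ^ 1 := by
      rw [hψ, e1, e2]
      field_simp
      ring
    refine ⟨hpsi, ?_⟩
    rw [hpsi, hcomp, Nat.add_comm]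
    exact e1
  constructor
  · -- fixed field part
    have main : ∀ m : ℕ, ∀ x : F, x ^ q ^ t = x →
        ψ^[m] x = x ^ q ^ ((m * (t - 1)) % (2 * t)) := by
      intro m
      induction m with
      | zero => intro x hx; simp
      | succ m ih =>
        intro x hx
        obtain ⟨hpsi, hfixed⟩ := hfix x hx
        rw [Function.iterate_succ_apply, ih (ψ x) hfixed, hpsi, hcomp,
          hred x hx (t - 1 + m * (t - 1) % (2 * t))]
        congr 1
        rw [Nat.add_mod, Nat.mod_mod_of_dvd _ dvd_rfl, ← Nat.add_mod]
        congr 1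
        ring
    exact main k
  · -- W part
    have main : ∀ m : ℕ, ∀ x : F, x ^ q ^ t = -x → ψ^[m] x = x ^ q ^ m := by
      intro m
      induction m with
      | zero => intro x hx; simp
      | succ m ih =>
        intro x hx
        obtain ⟨hpsi, hW'⟩ := hWs x hx
        rw [Function.iterate_succ_apply, ih (ψ x) hW', hpsi, hcomp, Nat.add_comm]
    exact main k
end
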